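/- arXiv:1509.06128 — 2 statements merged into one kernel-verified Lean document; each statement's English description precedes it below -/
import Mathlib

section
/- Let 𝓕 be a family of meromorphic functions on the unit disk 𝔻 and let a and b be two distinct holomorphic functions on 𝔻. Suppose that for every f ∈ 𝓕 and every z ∈ 𝔻, f(z) ≠ a(z) and f(z) ≠ b(z). If 𝓕 is normal in 𝔻 \ {0}, then 𝓕 is normal in 𝔻. -/
open OnePoint Metric Filter Complex Set

noncomputable section

/-- The finite part of a point of the Riemann sphere `ℂ ∪ {∞}` (junk value `0` at `∞`). -/
def sphToC (p : OnePoint ℂ) : ℂ := Option.elim p 0 id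

open Classical in
/-- Inversion `w ↦ 1/w` on the Riemann sphere `ℂ ∪ {∞}`. -/
def sphInv (p : OnePoint ℂ) : OnePoint ℂ :=
  if p = ∞ then ((0 : ℂ) : OnePoint ℂ)
  else if sphToC p = 0 then ∞ else (((sphToC p)⁻¹ : ℂ) : OnePoint ℂ)

open Classical in
/-- The spherical (chordal) metric on the Riemann sphere `ℂ ∪ {∞}`. -/
def sphDist (p q : OnePoint ℂ) : ℝ :=
  if p = ∞ then
    (if q = ∞ then 0 else 2 / Real.sqrt (1 + ‖sphToC q‖ ^ 2))
  else if q = ∞ then 2 / Real.sqrt (1 + ‖sphToC p‖ ^ 2)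
  else 2 * ‖sphToC p - sphToC q‖ /
    (Real.sqrt (1 + ‖sphToC p‖ ^ 2) * Real.sqrt (1 + ‖sphToC q‖ ^ 2))

/-- `f : ℂ → ℂ ∪ {∞}` is meromorphic at `z`: near `z` it agrees with an analytic function,
or with the spherical inverse of an analytic function (covering poles and `≡ ∞`). -/
def SphMeromorphicAt (f : ℂ → OnePoint ℂ) (z : ℂ) : Prop :=
  (∃ g : ℂ → ℂ, AnalyticAt ℂ g z ∧ ∀ᶠ w in nhds z, f w = ((g w : ℂ) : OnePoint ℂ)) ∨
  (∃ g : ℂ → ℂ, AnalyticAt ℂ g z ∧ ∀ᶠ w in nhds z, f w = sphInv ((g w : ℂ) : OnePoint ℂ))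

/-- `f` is meromorphic (as a map to the Riemann sphere) on a set `Ω ⊆ ℂ`. -/
def SphMeromorphicOn (f : ℂ → OnePoint ℂ) (Ω : Set ℂ) : Prop :=
  ∀ z ∈ Ω, SphMeromorphicAt f z

/-- Locally uniform (= uniform on compact subsets, for open `Ω`) convergence of a sequence of
sphere-valued functions on `Ω`, with respect to the spherical metric. -/
def SphLocUnifOn (F : ℕ → ℂ → OnePoint ℂ) (g : ℂ → OnePoint ℂ) (Ω : Set ℂ) : Prop :=
  ∀ K : Set ℂ, K ⊆ Ω → IsCompact K → ∀ ε : ℝ, 0 < ε →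
    ∃ N : ℕ, ∀ n ≥ N, ∀ z ∈ K, sphDist (F n z) (g z) < ε

/-- A family `𝓕` of sphere-valued functions is normal on `Ω`: every sequence in `𝓕` has a
subsequence converging locally uniformly on `Ω` (spherical metric) to a meromorphic function
or to the constant `∞`. -/
def SphNormalOn (𝓕 : Set (ℂ → OnePoint ℂ)) (Ω : Set ℂ) : Prop :=
  ∀ F : ℕ → ℂ → OnePoint ℂ, (∀ n, F n ∈ 𝓕) →
    ∃ φ : ℕ → ℕ, StrictMono φ ∧ ∃ g : ℂ → OnePoint ℂ,
      (SphMeromorphicOn g Ω ∨ ∀ z ∈ Ω, g z = ∞) ∧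
      SphLocUnifOn (fun n => F (φ n)) g Ω

/-- A family is normal at a point if it is normal on some open neighbourhood of the point. -/
def SphNormalAt (𝓕 : Set (ℂ → OnePoint ℂ)) (z₀ : ℂ) : Prop :=
  ∃ U : Set ℂ, IsOpen U ∧ z₀ ∈ U ∧ SphNormalOn 𝓕 U

open Classical in
/-- The derivative of a sphere-valued meromorphic function: `∞` at poles (and where `f = ∞`),
and the usual derivative of the finite part elsewhere. -/
def sphDeriv (f : ℂ → OnePoint ℂ) : ℂ → OnePoint ℂ :=
  fun z => if f z = ∞ then ∞ else ((deriv (fun w => sphToC (f w)) z : ℂ) : OnePoint ℂ)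

/-- All zeros of `f` on `Ω` have multiplicity at least `m`: at every zero, the first `m`
derivatives (orders `0, …, m-1`) of the finite part of `f` vanish. -/
def SphZerosMultAtLeast (f : ℂ → OnePoint ℂ) (Ω : Set ℂ) (m : ℕ) : Prop :=
  ∀ z ∈ Ω, f z = ((0 : ℂ) : OnePoint ℂ) →
    ∀ j < m, iteratedDeriv j (fun w => sphToC (f w)) z = 0


/-! ### Part 1: the chordal metric via the embedding into the sphere in ℝ³ -/

namespace SphAux

@[simp] lemma sphToC_coe (v : ℂ) : sphToC (v : OnePoint ℂ) = v := rfl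
@[simp] lemma sphToC_infty : sphToC (∞ : OnePoint ℂ) = 0 := rfl

/-- Stereographic embedding of the Riemann sphere into the unit sphere of ℝ³. -/
def psi (p : OnePoint ℂ) : EuclideanSpace ℝ (Fin 3) :=
  WithLp.toLp 2 (Option.elim p ![(0:ℝ), 0, 1]
    (fun v => ![2 * v.re / (1 + Complex.normSq v), 2 * v.im / (1 + Complex.normSq v),
      (Complex.normSq v - 1) / (1 + Complex.normSq v)]))

lemma psi_infty : psi ∞ = WithLp.toLp 2 ![0, 0, 1] := rfl

lemma psi_coe (v : ℂ) : psi (v : OnePoint ℂ) =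
    WithLp.toLp 2 ![2 * v.re / (1 + Complex.normSq v), 2 * v.im / (1 + Complex.normSq v),
      (Complex.normSq v - 1) / (1 + Complex.normSq v)] := rfl

lemma one_add_normSq_pos (v : ℂ) : 0 < 1 + Complex.normSq v := by
  have := Complex.normSq_nonneg v; linarith

lemma sqrt_one_add_sq (v : ℂ) :
    Real.sqrt (1 + ‖v‖ ^ 2) = Real.sqrt (1 + Complex.normSq v) := by
  rw [Complex.sq_norm]

lemma sqrt_one_add_normSq_pos (v : ℂ) : 0 < Real.sqrt (1 + Complex.normSq v) :=
  Real.sqrt_pos.2 (one_add_normSq_pos v)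

lemma sphDist_coe_coe (v w : ℂ) :
    sphDist (v : OnePoint ℂ) (w : OnePoint ℂ) =
      2 * ‖v - w‖ /
        (Real.sqrt (1 + Complex.normSq v) * Real.sqrt (1 + Complex.normSq w)) := by
  rw [sphDist, if_neg (OnePoint.coe_ne_infty v), if_neg (OnePoint.coe_ne_infty w)]
  simp [sqrt_one_add_sq]

lemma sphDist_coe_infty (v : ℂ) :
    sphDist (v : OnePoint ℂ) ∞ = 2 / Real.sqrt (1 + Complex.normSq v) := by
  rw [sphDist, if_neg (OnePoint.coe_ne_infty v), if_pos rfl]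
  simp [sqrt_one_add_sq]

lemma sphDist_infty_coe (v : ℂ) :
    sphDist ∞ (v : OnePoint ℂ) = 2 / Real.sqrt (1 + Complex.normSq v) := by
  rw [sphDist, if_pos rfl, if_neg (OnePoint.coe_ne_infty v)]
  simp [sqrt_one_add_sq]

@[simp] lemma sphDist_infty_infty : sphDist (∞ : OnePoint ℂ) ∞ = 0 := by
  rw [sphDist, if_pos rfl, if_pos rfl]

/-- The key identity: the chordal distance is the distance between the stereographic images. -/
lemma sphDist_eq (p q : OnePoint ℂ) : sphDist p q = dist (psi p) (psi q) := by
  have dist3 : ∀ x y : EuclideanSpace ℝ (Fin 3), dist x y =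
      Real.sqrt ((x 0 - y 0) ^ 2 + ((x 1 - y 1) ^ 2 + ((x 2 - y 2) ^ 2 + 0))) := by
    intro x y
    rw [EuclideanSpace.dist_eq]
    congr 1
    rw [Fin.sum_univ_three]
    simp [Real.dist_eq, sq_abs]
    ring
  induction p using OnePoint.rec with
  | infty =>
    induction q using OnePoint.rec with
    | infty => simp
    | coe w =>
      rw [sphDist_infty_coe, dist3, psi_infty, psi_coe]
      simp only [PiLp.toLp_apply, Matrix.cons_val_zero, Matrix.cons_val_one, Matrix.head_cons, Matrix.cons_val_two, Matrix.tail_cons]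
      have hB := one_add_normSq_pos w
      rw [show ((0:ℝ) - 2 * w.re / (1 + Complex.normSq w)) ^ 2 +
          (((0:ℝ) - 2 * w.im / (1 + Complex.normSq w)) ^ 2 +
          (((1:ℝ) - (Complex.normSq w - 1) / (1 + Complex.normSq w)) ^ 2 + 0)) =
          4 / (1 + Complex.normSq w) by
        rw [Complex.normSq_apply] at *
        field_simp
        ring]
      rw [show (4:ℝ) / (1 + Complex.normSq w) = (2 / Real.sqrt (1 + Complex.normSq w))^2 by
        rw [div_pow, Real.sq_sqrt hB.le]; norm_num]
      rw [Real.sqrt_sq (by positivity)]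
  | coe v =>
    induction q using OnePoint.rec with
    | infty =>
      rw [sphDist_coe_infty, dist3, psi_infty, psi_coe]
      simp only [PiLp.toLp_apply, Matrix.cons_val_zero, Matrix.cons_val_one, Matrix.head_cons, Matrix.cons_val_two, Matrix.tail_cons]
      have hB := one_add_normSq_pos v
      rw [show (2 * v.re / (1 + Complex.normSq v) - 0) ^ 2 +
          ((2 * v.im / (1 + Complex.normSq v) - 0) ^ 2 +
          (((Complex.normSq v - 1) / (1 + Complex.normSq v) - 1) ^ 2 + 0)) =
          4 / (1 + Complex.normSq v) by
        rw [Complex.normSq_apply] at *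
        field_simp
        ring]
      rw [show (4:ℝ) / (1 + Complex.normSq v) = (2 / Real.sqrt (1 + Complex.normSq v))^2 by
        rw [div_pow, Real.sq_sqrt hB.le]; norm_num]
      rw [Real.sqrt_sq (by positivity)]
    | coe w =>
      rw [sphDist_coe_coe, dist3, psi_coe, psi_coe]
      simp only [PiLp.toLp_apply, Matrix.cons_val_zero, Matrix.cons_val_one, Matrix.head_cons, Matrix.cons_val_two, Matrix.tail_cons]
      have hA := one_add_normSq_pos v
      have hB := one_add_normSq_pos w
      rw [show (2 * v.re / (1 + Complex.normSq v) - 2 * w.re / (1 + Complex.normSq w)) ^ 2 +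
          ((2 * v.im / (1 + Complex.normSq v) - 2 * w.im / (1 + Complex.normSq w)) ^ 2 +
          (((Complex.normSq v - 1) / (1 + Complex.normSq v) -
            (Complex.normSq w - 1) / (1 + Complex.normSq w)) ^ 2 + 0)) =
          4 * Complex.normSq (v - w) / ((1 + Complex.normSq v) * (1 + Complex.normSq w)) by
        simp only [Complex.normSq_apply, Complex.sub_re, Complex.sub_im] at *
        field_simp
        ring]
      rw [show (4:ℝ) * Complex.normSq (v - w) / ((1 + Complex.normSq v) * (1 + Complex.normSq w))
          = (2 * ‖v - w‖ /
            (Real.sqrt (1 + Complex.normSq v) * Real.sqrt (1 + Complex.normSq w)))^2 by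
        rw [div_pow, mul_pow, mul_pow, Real.sq_sqrt hA.le, Real.sq_sqrt hB.le, Complex.sq_norm]
        ring]
      rw [Real.sqrt_sq (by positivity)]

lemma sphDist_nonneg (p q : OnePoint ℂ) : 0 ≤ sphDist p q := by
  rw [sphDist_eq]; exact dist_nonneg

lemma sphDist_comm (p q : OnePoint ℂ) : sphDist p q = sphDist q p := by
  rw [sphDist_eq, sphDist_eq, dist_comm]

lemma sphDist_triangle (p q r : OnePoint ℂ) : sphDist p r ≤ sphDist p q + sphDist q r := by
  rw [sphDist_eq, sphDist_eq, sphDist_eq]; exact dist_triangle _ _ _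

@[simp] lemma sphDist_self (p : OnePoint ℂ) : sphDist p p = 0 := by
  rw [sphDist_eq]; simp

end SphAux

namespace SphAux

lemma one_le_sqrt_one_add (v : ℂ) : 1 ≤ Real.sqrt (1 + Complex.normSq v) := by
  have h := Real.sq_sqrt (one_add_normSq_pos v).le
  nlinarith [Real.sqrt_nonneg (1 + Complex.normSq v), Complex.normSq_nonneg v]

lemma eq_of_sphDist_eq_zero {p q : OnePoint ℂ} (h : sphDist p q = 0) : p = q := by
  induction p using OnePoint.rec with
  | infty =>
    induction q using OnePoint.rec with
    | infty => rfl
    | coe w =>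
      exfalso
      rw [sphDist_infty_coe] at h
      have := sqrt_one_add_normSq_pos w
      have : (0:ℝ) < 2 / Real.sqrt (1 + Complex.normSq w) := by positivity
      linarith
  | coe v =>
    induction q using OnePoint.rec with
    | infty =>
      exfalso
      rw [sphDist_coe_infty] at h
      have := sqrt_one_add_normSq_pos v
      have : (0:ℝ) < 2 / Real.sqrt (1 + Complex.normSq v) := by positivity
      linarith
    | coe w =>
      rw [sphDist_coe_coe] at h
      have hA := sqrt_one_add_normSq_pos v
      have hB := sqrt_one_add_normSq_pos w
      have h2 : ‖v - w‖ = 0 := by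
        by_contra hne
        have hpos : 0 < ‖v - w‖ :=
          lt_of_le_of_ne (norm_nonneg _) (Ne.symm hne)
        have : (0:ℝ) < 2 * ‖v - w‖ /
            (Real.sqrt (1 + Complex.normSq v) * Real.sqrt (1 + Complex.normSq w)) := by positivity
        linarith
      have h3 : v = w := sub_eq_zero.mp (norm_eq_zero.mp h2)
      rw [h3]

lemma sphDist_coe_coe_le (v w : ℂ) :
    sphDist (v : OnePoint ℂ) (w : OnePoint ℂ) ≤ 2 * ‖v - w‖ := by
  rw [sphDist_coe_coe]
  have hA := one_le_sqrt_one_add v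
  have hB := one_le_sqrt_one_add w
  have h1 : (1:ℝ) ≤ Real.sqrt (1 + Complex.normSq v) * Real.sqrt (1 + Complex.normSq w) := by
    nlinarith
  rw [div_le_iff₀ (by linarith)]
  have h2 : 0 ≤ 2 * ‖v - w‖ := by positivity
  nlinarith

/-- From a lower bound on the chordal distance to `∞`, an upper bound on the modulus. -/
lemma abs_le_of_sphDist_infty {v : ℂ} {m : ℝ} (hm : 0 < m)
    (h : m ≤ sphDist (v : OnePoint ℂ) ∞) : ‖v‖ ≤ 2 / m := by
  rw [sphDist_coe_infty] at h
  have hs := sqrt_one_add_normSq_pos v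
  have h1 : m * Real.sqrt (1 + Complex.normSq v) ≤ 2 := by
    rw [div_eq_mul_inv] at h
    calc m * Real.sqrt (1 + Complex.normSq v)
        ≤ (2 * (Real.sqrt (1 + Complex.normSq v))⁻¹) * Real.sqrt (1 + Complex.normSq v) := by
          apply mul_le_mul_of_nonneg_right h hs.le
      _ = 2 := by field_simp
  have h2 : Real.sqrt (1 + Complex.normSq v) ≤ 2 / m := by
    rw [le_div_iff₀ hm]; linarith
  have h3 : ‖v‖ ≤ Real.sqrt (1 + Complex.normSq v) := by
    rw [show ‖v‖ = Real.sqrt (Complex.normSq v) from (Complex.norm_def _)]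
    exact Real.sqrt_le_sqrt (by linarith)
  linarith

/-- From chordal distance to euclidean distance, given modulus bounds. -/
lemma abs_sub_le_of_sphDist {v w : ℂ} {M : ℝ} (hv : ‖v‖ ≤ M) (hw : ‖w‖ ≤ M) :
    ‖v - w‖ ≤ (1 + M ^ 2) * sphDist (v : OnePoint ℂ) (w : OnePoint ℂ) := by
  have hM : 0 ≤ M := le_trans (norm_nonneg v) hv
  rw [sphDist_coe_coe]
  have hA : Real.sqrt (1 + Complex.normSq v) ≤ Real.sqrt (1 + M ^ 2) := by
    apply Real.sqrt_le_sqrt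
    have : Complex.normSq v ≤ M ^ 2 := by
      rw [← Complex.sq_norm]; nlinarith [norm_nonneg v]
    linarith
  have hB : Real.sqrt (1 + Complex.normSq w) ≤ Real.sqrt (1 + M ^ 2) := by
    apply Real.sqrt_le_sqrt
    have : Complex.normSq w ≤ M ^ 2 := by
      rw [← Complex.sq_norm]; nlinarith [norm_nonneg w]
    linarith
  have hA0 := sqrt_one_add_normSq_pos v
  have hB0 := sqrt_one_add_normSq_pos w
  have hs : Real.sqrt (1 + M ^ 2) ^ 2 = 1 + M ^ 2 := Real.sq_sqrt (by positivity)
  have key : Real.sqrt (1 + Complex.normSq v) * Real.sqrt (1 + Complex.normSq w) ≤ 1 + M ^ 2 := by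
    calc Real.sqrt (1 + Complex.normSq v) * Real.sqrt (1 + Complex.normSq w)
        ≤ Real.sqrt (1 + M ^ 2) * Real.sqrt (1 + M ^ 2) :=
          mul_le_mul hA hB hB0.le (Real.sqrt_nonneg _)
      _ = 1 + M ^ 2 := by rw [← sq]; exact hs
  have habs : (0:ℝ) ≤ ‖v - w‖ := norm_nonneg _
  have h2 : (Real.sqrt (1 + Complex.normSq v) * Real.sqrt (1 + Complex.normSq w)) *
      (2 * ‖v - w‖ /
        (Real.sqrt (1 + Complex.normSq v) * Real.sqrt (1 + Complex.normSq w)))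
      = 2 * ‖v - w‖ := by field_simp
  calc ‖v - w‖ ≤ 2 * ‖v - w‖ := by linarith
    _ = (Real.sqrt (1 + Complex.normSq v) * Real.sqrt (1 + Complex.normSq w)) *
        (2 * ‖v - w‖ /
          (Real.sqrt (1 + Complex.normSq v) * Real.sqrt (1 + Complex.normSq w))) := h2.symm
    _ ≤ (1 + M ^ 2) * (2 * ‖v - w‖ /
          (Real.sqrt (1 + Complex.normSq v) * Real.sqrt (1 + Complex.normSq w))) :=
        mul_le_mul_of_nonneg_right key (by positivity)

lemma sphInv_coe_ne_zero {v : ℂ} (hv : v ≠ 0) :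
    sphInv (v : OnePoint ℂ) = ((v⁻¹ : ℂ) : OnePoint ℂ) := by
  rw [sphInv, if_neg (OnePoint.coe_ne_infty v), sphToC_coe, if_neg hv]

lemma sphInv_coe_zero : sphInv ((0 : ℂ) : OnePoint ℂ) = ∞ := by
  rw [sphInv, if_neg (OnePoint.coe_ne_infty 0), sphToC_coe, if_pos rfl]

lemma sphInv_infty : sphInv (∞ : OnePoint ℂ) = ((0:ℂ) : OnePoint ℂ) := by
  rw [sphInv, if_pos rfl]

lemma sqrt_one_add_normSq_inv {v : ℂ} (hv : v ≠ 0) :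
    Real.sqrt (1 + Complex.normSq v⁻¹) =
      Real.sqrt (1 + Complex.normSq v) / Real.sqrt (Complex.normSq v) := by
  have h0 : Complex.normSq v ≠ 0 := fun h => hv (Complex.normSq_eq_zero.mp h)
  have h1 : (1 + Complex.normSq v⁻¹) = (1 + Complex.normSq v) / Complex.normSq v := by
    rw [Complex.normSq_inv]; field_simp; ring
  rw [h1, Real.sqrt_div (one_add_normSq_pos v).le _]

lemma sqrt_normSq_pos {v : ℂ} (hv : v ≠ 0) : 0 < Real.sqrt (Complex.normSq v) := by
  apply Real.sqrt_pos.2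
  rcases (Complex.normSq_nonneg v).lt_or_eq with h | h
  · exact h
  · exact absurd (Complex.normSq_eq_zero.mp h.symm) hv

lemma abs_eq_sqrt_normSq (v : ℂ) : ‖v‖ = Real.sqrt (Complex.normSq v) :=
  (Complex.norm_def _)

/-- Inversion is an isometry for the chordal metric. -/
lemma sphDist_sphInv (p q : OnePoint ℂ) : sphDist (sphInv p) (sphInv q) = sphDist p q := by
  induction p using OnePoint.rec with
  | infty =>
    induction q using OnePoint.rec with
    | infty => rw [sphInv_infty]; rw [sphDist_coe_coe]; simp
    | coe w =>
      rw [sphInv_infty]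
      by_cases hw : w = 0
      · subst hw
        rw [sphInv_coe_zero, sphDist_coe_infty, sphDist_infty_coe]
      · rw [sphInv_coe_ne_zero hw, sphDist_coe_coe, sphDist_infty_coe,
          sqrt_one_add_normSq_inv hw]
        have h1 := sqrt_normSq_pos hw
        have h2 := sqrt_one_add_normSq_pos w
        have h3 : ‖0 - w⁻¹‖ = (Real.sqrt (Complex.normSq w))⁻¹ := by
          rw [zero_sub, norm_neg, norm_inv, abs_eq_sqrt_normSq]
        rw [h3, Complex.normSq_zero]
        rw [show (1:ℝ) + 0 = 1 by ring, Real.sqrt_one]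
        field_simp
  | coe v =>
    induction q using OnePoint.rec with
    | infty =>
      rw [sphInv_infty]
      by_cases hv : v = 0
      · subst hv
        rw [sphInv_coe_zero, sphDist_infty_coe, sphDist_coe_infty]
      · rw [sphInv_coe_ne_zero hv, sphDist_coe_coe, sphDist_coe_infty,
          sqrt_one_add_normSq_inv hv]
        have h1 := sqrt_normSq_pos hv
        have h2 := sqrt_one_add_normSq_pos v
        have h3 : ‖v⁻¹ - 0‖ = (Real.sqrt (Complex.normSq v))⁻¹ := by
          rw [sub_zero, norm_inv, abs_eq_sqrt_normSq]
        rw [h3, Complex.normSq_zero]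
        rw [show (1:ℝ) + 0 = 1 by ring, Real.sqrt_one]
        field_simp
    | coe w =>
      by_cases hv : v = 0
      · subst hv
        rw [sphInv_coe_zero]
        by_cases hw : w = 0
        · subst hw; rw [sphInv_coe_zero]; rw [sphDist_coe_coe]; simp
        · rw [sphInv_coe_ne_zero hw, sphDist_infty_coe, sphDist_coe_coe,
            sqrt_one_add_normSq_inv hw]
          have h1 := sqrt_normSq_pos hw
          have h2 := sqrt_one_add_normSq_pos w
          have h3 : ‖0 - w‖ = Real.sqrt (Complex.normSq w) := by
            rw [zero_sub, norm_neg, abs_eq_sqrt_normSq]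
          rw [h3, Complex.normSq_zero]
          rw [show (1:ℝ) + 0 = 1 by ring, Real.sqrt_one]
          field_simp
      · by_cases hw : w = 0
        · subst hw
          rw [sphInv_coe_zero, sphInv_coe_ne_zero hv, sphDist_coe_infty, sphDist_coe_coe,
            sqrt_one_add_normSq_inv hv]
          have h1 := sqrt_normSq_pos hv
          have h2 := sqrt_one_add_normSq_pos v
          have h3 : ‖v - 0‖ = Real.sqrt (Complex.normSq v) := by
            rw [sub_zero, abs_eq_sqrt_normSq]
          rw [h3, Complex.normSq_zero]
          rw [show (1:ℝ) + 0 = 1 by ring, Real.sqrt_one]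
          field_simp
        · rw [sphInv_coe_ne_zero hv, sphInv_coe_ne_zero hw, sphDist_coe_coe, sphDist_coe_coe,
            sqrt_one_add_normSq_inv hv, sqrt_one_add_normSq_inv hw]
          have h1 := sqrt_normSq_pos hv
          have h2 := sqrt_normSq_pos hw
          have h3 := sqrt_one_add_normSq_pos v
          have h4 := sqrt_one_add_normSq_pos w
          have h5 : ‖v⁻¹ - w⁻¹‖ =
              ‖v - w‖ / (Real.sqrt (Complex.normSq v) * Real.sqrt (Complex.normSq w)) := by
            rw [inv_sub_inv hv hw, norm_div, norm_mul, norm_sub_rev,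
              abs_eq_sqrt_normSq v, abs_eq_sqrt_normSq w]
          rw [h5]
          field_simp

end SphAux

namespace SphAux

/-- Subtraction of a finite constant on the Riemann sphere. -/
def sphSub (p : OnePoint ℂ) (c : ℂ) : OnePoint ℂ :=
  Option.elim p ∞ (fun v => ((v - c : ℂ) : OnePoint ℂ))

@[simp] lemma sphSub_infty (c : ℂ) : sphSub ∞ c = ∞ := rfl
@[simp] lemma sphSub_coe (v c : ℂ) : sphSub (v : OnePoint ℂ) c = ((v - c : ℂ) : OnePoint ℂ) := rfl

lemma sqrt_shift_le (v c : ℂ) :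
    Real.sqrt (1 + Complex.normSq v) ≤
      2 * (1 + Complex.normSq c) * Real.sqrt (1 + Complex.normSq (v - c)) := by
  have habs : ‖v‖ ≤ ‖v - c‖ + ‖c‖ := by
    calc ‖v‖ = ‖(v - c) + c‖ := by ring_nf
      _ ≤ ‖v - c‖ + ‖c‖ := norm_add_le _ _
  have hv : Complex.normSq v = ‖v‖ ^ 2 := (Complex.sq_norm v).symm
  have hc : Complex.normSq c = ‖c‖ ^ 2 := (Complex.sq_norm c).symm
  have hvc : Complex.normSq (v - c) = ‖v - c‖ ^ 2 := (Complex.sq_norm (v - c)).symm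
  have h1 : 1 + Complex.normSq v ≤
      (2 * (1 + Complex.normSq c)) ^ 2 * (1 + Complex.normSq (v - c)) := by
    rw [hv, hc, hvc]
    nlinarith [norm_nonneg v, norm_nonneg c, norm_nonneg (v - c),
      sq_nonneg (‖v-c‖ - ‖c‖), sq_nonneg (‖v-c‖ + ‖c‖),
      sq_nonneg (‖c‖), sq_nonneg (‖v - c‖),
      sq_nonneg (‖c‖ * ‖v - c‖)]
  have h2 : (0:ℝ) < 2 * (1 + Complex.normSq c) := by
    have := Complex.normSq_nonneg c; linarith
  calc Real.sqrt (1 + Complex.normSq v)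
      ≤ Real.sqrt ((2 * (1 + Complex.normSq c)) ^ 2 * (1 + Complex.normSq (v - c))) :=
        Real.sqrt_le_sqrt h1
    _ = 2 * (1 + Complex.normSq c) * Real.sqrt (1 + Complex.normSq (v - c)) := by
        rw [Real.sqrt_mul (by positivity), Real.sqrt_sq h2.le]


lemma sqrt_shift_le' (v c : ℂ) :
    Real.sqrt (1 + Complex.normSq (v - c)) ≤
      2 * (1 + Complex.normSq c) * Real.sqrt (1 + Complex.normSq v) := by
  have h := sqrt_shift_le (v - c) (-c)
  simpa [Complex.normSq_neg, sub_neg_eq_add, sub_add_cancel] using h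

/-- Translation on the sphere expands the chordal metric by at most `2(1+|c|²)`. -/
lemma sphDist_sphSub_le (p q : OnePoint ℂ) (c : ℂ) :
    sphDist (sphSub p c) (sphSub q c) ≤ 2 * (1 + Complex.normSq c) * sphDist p q := by
  have hK : (0:ℝ) < 2 * (1 + Complex.normSq c) := by
    have := Complex.normSq_nonneg c; linarith
  induction p using OnePoint.rec with
  | infty =>
    induction q using OnePoint.rec with
    | infty => simp
    | coe w =>
      rw [sphSub_infty, sphSub_coe, sphDist_infty_coe, sphDist_infty_coe]
      have h1 := sqrt_shift_le w c
      have h2 := sqrt_one_add_normSq_pos w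
      have h3 := sqrt_one_add_normSq_pos (w - c)
      rw [div_le_iff₀ h3]
      rw [show 2 * (1 + Complex.normSq c) * (2 / Real.sqrt (1 + Complex.normSq w)) *
          Real.sqrt (1 + Complex.normSq (w - c)) =
          2 * (Real.sqrt (1 + Complex.normSq (w - c))) * ((1 + Complex.normSq c) * 2) /
            Real.sqrt (1 + Complex.normSq w) by ring]
      rw [le_div_iff₀ h2]
      nlinarith
  | coe v =>
    induction q using OnePoint.rec with
    | infty =>
      rw [sphSub_infty, sphSub_coe, sphDist_coe_infty, sphDist_coe_infty]
      have h1 := sqrt_shift_le v c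
      have h2 := sqrt_one_add_normSq_pos v
      have h3 := sqrt_one_add_normSq_pos (v - c)
      rw [div_le_iff₀ h3]
      rw [show 2 * (1 + Complex.normSq c) * (2 / Real.sqrt (1 + Complex.normSq v)) *
          Real.sqrt (1 + Complex.normSq (v - c)) =
          2 * (Real.sqrt (1 + Complex.normSq (v - c))) * ((1 + Complex.normSq c) * 2) /
            Real.sqrt (1 + Complex.normSq v) by ring]
      rw [le_div_iff₀ h2]
      nlinarith
    | coe w =>
      rw [sphSub_coe, sphSub_coe, sphDist_coe_coe, sphDist_coe_coe]
      have h1 := sqrt_shift_le v c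
      have h2 := sqrt_shift_le w c
      have hA := sqrt_one_add_normSq_pos v
      have hB := sqrt_one_add_normSq_pos w
      have hA' := sqrt_one_add_normSq_pos (v - c)
      have hB' := sqrt_one_add_normSq_pos (w - c)
      have hvw : v - c - (w - c) = v - w := by ring
      rw [hvw]
      have habs : (0:ℝ) ≤ ‖v - w‖ := norm_nonneg _
      rw [div_le_iff₀ (by positivity)]
      rw [show 2 * (1 + Complex.normSq c) * (2 * ‖v - w‖ /
            (Real.sqrt (1 + Complex.normSq v) * Real.sqrt (1 + Complex.normSq w))) *
          (Real.sqrt (1 + Complex.normSq (v - c)) * Real.sqrt (1 + Complex.normSq (w - c))) =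
          (2 * ‖v - w‖) * (2 * (1 + Complex.normSq c) *
            (Real.sqrt (1 + Complex.normSq (v - c)) * Real.sqrt (1 + Complex.normSq (w - c)))) /
            (Real.sqrt (1 + Complex.normSq v) * Real.sqrt (1 + Complex.normSq w))
          by ring]
      rw [le_div_iff₀ (by positivity)]
      -- key: sA * sB ≤ 2(1+nc) * sA' * sB'
      have key : Real.sqrt (1 + Complex.normSq v) * Real.sqrt (1 + Complex.normSq w) ≤
          2 * (1 + Complex.normSq c) *
            (Real.sqrt (1 + Complex.normSq (v - c)) * Real.sqrt (1 + Complex.normSq (w - c))) := by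
        have e1 : Real.sqrt (1 + Complex.normSq v) * Real.sqrt (1 + Complex.normSq w) =
            Real.sqrt ((1 + Complex.normSq v) * (1 + Complex.normSq w)) := by
          rw [Real.sqrt_mul (one_add_normSq_pos v).le]
        have lin : ∀ u : ℂ, 1 + Complex.normSq u ≤
            2 * (1 + Complex.normSq c) * (1 + Complex.normSq (u - c)) := by
          intro u
          have habs : ‖u‖ ≤ ‖u - c‖ + ‖c‖ := by
            calc ‖u‖ = ‖(u - c) + c‖ := by ring_nf
              _ ≤ ‖u - c‖ + ‖c‖ := norm_add_le _ _
          have hu : Complex.normSq u = ‖u‖ ^ 2 := (Complex.sq_norm u).symm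
          have hc : Complex.normSq c = ‖c‖ ^ 2 := (Complex.sq_norm c).symm
          have huc : Complex.normSq (u - c) = ‖u - c‖ ^ 2 := (Complex.sq_norm (u - c)).symm
          rw [hu, hc, huc]
          nlinarith [norm_nonneg u, norm_nonneg c, norm_nonneg (u - c),
            sq_nonneg (‖u - c‖ - ‖c‖),
            sq_nonneg (‖c‖ * ‖u - c‖)]
        have p1 := lin v
        have p2 := lin w
        have hprod : (1 + Complex.normSq v) * (1 + Complex.normSq w) ≤
            (2 * (1 + Complex.normSq c)) ^ 2 *
              ((1 + Complex.normSq (v - c)) * (1 + Complex.normSq (w - c))) := by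
          nlinarith [one_add_normSq_pos v, one_add_normSq_pos w,
            one_add_normSq_pos (v - c), one_add_normSq_pos (w - c)]
        calc Real.sqrt (1 + Complex.normSq v) * Real.sqrt (1 + Complex.normSq w)
            = Real.sqrt ((1 + Complex.normSq v) * (1 + Complex.normSq w)) := e1
          _ ≤ Real.sqrt ((2 * (1 + Complex.normSq c)) ^ 2 *
              ((1 + Complex.normSq (v - c)) * (1 + Complex.normSq (w - c)))) :=
            Real.sqrt_le_sqrt hprod
          _ = 2 * (1 + Complex.normSq c) *
              (Real.sqrt (1 + Complex.normSq (v - c)) * Real.sqrt (1 + Complex.normSq (w - c))) := by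
            rw [Real.sqrt_mul (by positivity), Real.sqrt_sq hK.le,
              Real.sqrt_mul (one_add_normSq_pos (v - c)).le]
      nlinarith

end SphAux

namespace SphAux

lemma coe_sphToC {p : OnePoint ℂ} (hp : p ≠ ∞) : ((sphToC p : ℂ) : OnePoint ℂ) = p := by
  induction p using OnePoint.rec with
  | infty => exact absurd rfl hp
  | coe v => rfl

lemma sphInv_sphSub_ne_infty {p : OnePoint ℂ} {c : ℂ} (h : p ≠ ((c : ℂ) : OnePoint ℂ)) :
    sphInv (sphSub p c) ≠ ∞ := by
  induction p using OnePoint.rec with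
  | infty =>
    rw [sphSub_infty, sphInv_infty]
    exact OnePoint.coe_ne_infty 0
  | coe v =>
    rw [sphSub_coe]
    have hvc : v - c ≠ 0 := sub_ne_zero.2 (fun hh => h (by rw [hh]))
    rw [sphInv_coe_ne_zero hvc]
    exact OnePoint.coe_ne_infty _

/-- The function `1/(f - c)` with value `0` where `f = ∞`. -/
def invRep (f : ℂ → OnePoint ℂ) (c : ℂ → ℂ) (z : ℂ) : ℂ :=
  sphToC (sphInv (sphSub (f z) (c z)))

lemma invRep_of_infty {f : ℂ → OnePoint ℂ} {c : ℂ → ℂ} {z : ℂ} (h : f z = ∞) :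
    invRep f c z = 0 := by
  rw [invRep, h, sphSub_infty, sphInv_infty, sphToC_coe]

lemma invRep_of_coe {f : ℂ → OnePoint ℂ} {c : ℂ → ℂ} {z : ℂ} {v : ℂ} (h : f z = (v : OnePoint ℂ))
    (hv : v ≠ c z) : invRep f c z = (v - c z)⁻¹ := by
  rw [invRep, h, sphSub_coe, sphInv_coe_ne_zero (sub_ne_zero.2 hv), sphToC_coe]

/-- Pointwise description of `f` in terms of `invRep`. -/
lemma invRep_spec {f : ℂ → OnePoint ℂ} {c : ℂ → ℂ} {z : ℂ}
    (h : f z ≠ ((c z : ℂ) : OnePoint ℂ)) :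
    (invRep f c z = 0 ∧ f z = ∞) ∨
      (invRep f c z ≠ 0 ∧ f z = ((c z + (invRep f c z)⁻¹ : ℂ) : OnePoint ℂ)) := by
  cases hfz : f z with
  | infty => exact Or.inl ⟨invRep_of_infty hfz, rfl⟩
  | coe v =>
    have hfz : f z = ((v : ℂ) : OnePoint ℂ) := hfz
    rw [hfz] at h
    have hv : v ≠ c z := fun hh => h (by rw [hh])
    have h1 : invRep f c z = (v - c z)⁻¹ := invRep_of_coe hfz hv
    have h2 : invRep f c z ≠ 0 := by rw [h1]; exact inv_ne_zero (sub_ne_zero.2 hv)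
    refine Or.inr ⟨h2, ?_⟩
    rw [h1, inv_inv]
    congr 1
    ring

/-- Chordal distance between `invRep` values is controlled by chordal distance of the functions. -/
lemma sphDist_invRep_le {f g : ℂ → OnePoint ℂ} {c : ℂ → ℂ} {z : ℂ}
    (hf : f z ≠ ((c z : ℂ) : OnePoint ℂ)) (hg : g z ≠ ((c z : ℂ) : OnePoint ℂ)) :
    sphDist ((invRep f c z : ℂ) : OnePoint ℂ) ((invRep g c z : ℂ) : OnePoint ℂ) ≤
      2 * (1 + Complex.normSq (c z)) * sphDist (f z) (g z) := by
  have h1 : ((invRep f c z : ℂ) : OnePoint ℂ) = sphInv (sphSub (f z) (c z)) :=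
    coe_sphToC (sphInv_sphSub_ne_infty hf)
  have h2 : ((invRep g c z : ℂ) : OnePoint ℂ) = sphInv (sphSub (g z) (c z)) :=
    coe_sphToC (sphInv_sphSub_ne_infty hg)
  rw [h1, h2, sphDist_sphInv]
  exact sphDist_sphSub_le _ _ _

lemma sphSub_sphSub_neg (p : OnePoint ℂ) (c : ℂ) : sphSub (sphSub p c) (-c) = p := by
  induction p using OnePoint.rec with
  | infty => rfl
  | coe v => rw [sphSub_coe, sphSub_coe, sub_neg_eq_add, sub_add_cancel]

lemma sphDist_le_sphSub (p q : OnePoint ℂ) (c : ℂ) :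
    sphDist p q ≤ 2 * (1 + Complex.normSq c) * sphDist (sphSub p c) (sphSub q c) := by
  have h := sphDist_sphSub_le (sphSub p c) (sphSub q c) (-c)
  rw [sphSub_sphSub_neg, sphSub_sphSub_neg, Complex.normSq_neg] at h
  exact h

/-- Lower bound: `sphDist (invRep) ∞` in terms of `sphDist f c`. -/
lemma sphDist_invRep_infty {f : ℂ → OnePoint ℂ} {c : ℂ → ℂ} {z : ℂ}
    (hf : f z ≠ ((c z : ℂ) : OnePoint ℂ)) :
    sphDist (f z) ((c z : ℂ) : OnePoint ℂ) ≤
      2 * (1 + Complex.normSq (c z)) * sphDist ((invRep f c z : ℂ) : OnePoint ℂ) ∞ := by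
  have h1 : ((invRep f c z : ℂ) : OnePoint ℂ) = sphInv (sphSub (f z) (c z)) :=
    coe_sphToC (sphInv_sphSub_ne_infty hf)
  have h2 : (∞ : OnePoint ℂ) = sphInv (sphSub ((c z : ℂ) : OnePoint ℂ) (c z)) := by
    rw [sphSub_coe, sub_self, sphInv_coe_zero]
  rw [h1, h2, sphDist_sphInv]
  exact sphDist_le_sphSub _ _ _

/-- Analyticity of `invRep` for a meromorphic `f` avoiding the analytic function `c`. -/
lemma analyticAt_invRep {f : ℂ → OnePoint ℂ} {c : ℂ → ℂ} {z₀ : ℂ} {U : Set ℂ}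
    (hU : IsOpen U) (hz₀ : z₀ ∈ U) (hmero : SphMeromorphicAt f z₀) (hc : AnalyticAt ℂ c z₀)
    (hav : ∀ z ∈ U, f z ≠ ((c z : ℂ) : OnePoint ℂ)) :
    AnalyticAt ℂ (invRep f c) z₀ := by
  have hUnhds : U ∈ nhds z₀ := hU.mem_nhds hz₀
  rcases hmero with ⟨g, hg, he⟩ | ⟨g, hg, he⟩
  · -- f is locally `coe ∘ g`
    have hgz₀ : g z₀ - c z₀ ≠ 0 := by
      have h1 : f z₀ = ((g z₀ : ℂ) : OnePoint ℂ) := he.self_of_nhds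
      have h2 := hav z₀ hz₀
      rw [h1] at h2
      exact sub_ne_zero.2 (fun hh => h2 (by rw [hh]))
    have hA : AnalyticAt ℂ (fun w => (g w - c w)⁻¹) z₀ := (hg.sub hc).inv hgz₀
    apply hA.congr
    filter_upwards [he, hUnhds] with w hw hwU
    have hvc : g w ≠ c w := by
      have := hav w hwU
      rw [hw] at this
      exact fun hh => this (by rw [hh])
    rw [invRep_of_coe hw hvc]
  · -- f is locally `sphInv ∘ coe ∘ g`
    have hne : ∀ w, w ∈ U → f w = sphInv ((g w : ℂ) : OnePoint ℂ) → 1 - c w * g w ≠ 0 := by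
      intro w hwU hw
      by_cases hgw : g w = 0
      · rw [hgw]; norm_num
      · have h1 : f w = (((g w)⁻¹ : ℂ) : OnePoint ℂ) := by rw [hw, sphInv_coe_ne_zero hgw]
        have h2 := hav w hwU
        rw [h1] at h2
        have h3 : (g w)⁻¹ ≠ c w := fun hh => h2 (by rw [hh])
        intro hcon
        have h5 : c w * g w = 1 := by linear_combination -hcon
        exact h3 (eq_inv_of_mul_eq_one_left h5).symm
    have hz : 1 - c z₀ * g z₀ ≠ 0 := hne z₀ hz₀ he.self_of_nhds
    have hA : AnalyticAt ℂ (fun w => g w / (1 - c w * g w)) z₀ :=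
      hg.div ((analyticAt_const.sub (hc.mul hg))) hz
    apply hA.congr
    filter_upwards [he, hUnhds] with w hw hwU
    by_cases hgw : g w = 0
    · have hfw : f w = ∞ := by rw [hw, hgw]; exact sphInv_coe_zero
      rw [invRep_of_infty hfw, hgw, zero_div]
    · have h1 : f w = (((g w)⁻¹ : ℂ) : OnePoint ℂ) := by rw [hw, sphInv_coe_ne_zero hgw]
      have h2 := hav w hwU
      rw [h1] at h2
      have h3 : (g w)⁻¹ ≠ c w := fun hh => h2 (by rw [hh])
      rw [invRep_of_coe h1 h3]
      have h4 : 1 - c w * g w ≠ 0 := hne w hwU hw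
      have h5 : (g w)⁻¹ - c w = (1 - c w * g w) / g w := by
        field_simp
      rw [h5, inv_div]

end SphAux

namespace SphAux

/-- `psi` composed with the finite-point embedding. -/
def psiC (v : ℂ) : EuclideanSpace ℝ (Fin 3) := psi (v : OnePoint ℂ)

/-- `psi` composed with inversion of a finite point. -/
def psiI (v : ℂ) : EuclideanSpace ℝ (Fin 3) := psi (sphInv (v : OnePoint ℂ))

lemma psiI_eq (v : ℂ) : psiI v =
    WithLp.toLp 2 ![2 * v.re / (1 + Complex.normSq v), -(2 * v.im) / (1 + Complex.normSq v),
      (1 - Complex.normSq v) / (1 + Complex.normSq v)] := by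
  by_cases hv : v = 0
  · subst hv
    rw [psiI, sphInv_coe_zero, psi_infty]
    congr 1
    funext i
    fin_cases i <;> norm_num
  · have h0 : Complex.normSq v ≠ 0 := fun h => hv (Complex.normSq_eq_zero.mp h)
    have hpos : 0 < Complex.normSq v := lt_of_le_of_ne (Complex.normSq_nonneg v) (Ne.symm h0)
    have h2 : Complex.normSq v + Complex.normSq v ^ 2 ≠ 0 := ne_of_gt (by nlinarith)
    have h3 : 1 + Complex.normSq v ≠ 0 := (one_add_normSq_pos v).ne'
    rw [psiI, sphInv_coe_ne_zero hv, psi_coe]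
    congr 1
    funext i
    fin_cases i <;>
      (simp only [Complex.inv_re, Complex.inv_im, Complex.normSq_inv, Matrix.cons_val_zero,
        Matrix.cons_val_one, Matrix.head_cons, Matrix.cons_val_two, Matrix.tail_cons]
       field_simp
       try ring
       try exact Or.inl trivial)

lemma continuous_vec3 {f1 f2 f3 : ℂ → ℝ} (h1 : Continuous f1) (h2 : Continuous f2)
    (h3 : Continuous f3) :
    Continuous (fun v => ((WithLp.equiv 2 (Fin 3 → ℝ)).symm ![f1 v, f2 v, f3 v] :
      EuclideanSpace ℝ (Fin 3))) := by
  apply (PiLp.continuous_toLp _ _).comp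
  apply continuous_pi
  intro i
  fin_cases i <;> simpa

lemma cont_den : Continuous (fun v : ℂ => 1 + Complex.normSq v) :=
  continuous_const.add Complex.continuous_normSq

lemma continuous_psiC : Continuous psiC := by
  have h1 : Continuous (fun v : ℂ => 2 * v.re / (1 + Complex.normSq v)) :=
    (continuous_const.mul Complex.continuous_re).div cont_den fun v => (one_add_normSq_pos v).ne'
  have h2 : Continuous (fun v : ℂ => 2 * v.im / (1 + Complex.normSq v)) :=
    (continuous_const.mul Complex.continuous_im).div cont_den fun v => (one_add_normSq_pos v).ne'
  have h3 : Continuous (fun v : ℂ => (Complex.normSq v - 1) / (1 + Complex.normSq v)) :=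
    (Complex.continuous_normSq.sub continuous_const).div cont_den
      fun v => (one_add_normSq_pos v).ne'
  exact continuous_vec3 h1 h2 h3

lemma continuous_psiI : Continuous psiI := by
  have h1 : Continuous (fun v : ℂ => 2 * v.re / (1 + Complex.normSq v)) :=
    (continuous_const.mul Complex.continuous_re).div cont_den fun v => (one_add_normSq_pos v).ne'
  have h2 : Continuous (fun v : ℂ => -(2 * v.im) / (1 + Complex.normSq v)) :=
    (continuous_const.mul Complex.continuous_im).neg.div cont_den
      fun v => (one_add_normSq_pos v).ne'
  have h3 : Continuous (fun v : ℂ => (1 - Complex.normSq v) / (1 + Complex.normSq v)) :=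
    (continuous_const.sub Complex.continuous_normSq).div cont_den
      fun v => (one_add_normSq_pos v).ne'
  have h := continuous_vec3 h1 h2 h3
  have he : psiI = fun v => ((WithLp.equiv 2 (Fin 3 → ℝ)).symm
      ![2 * v.re / (1 + Complex.normSq v), -(2 * v.im) / (1 + Complex.normSq v),
        (1 - Complex.normSq v) / (1 + Complex.normSq v)] : EuclideanSpace ℝ (Fin 3)) := by
    funext v
    exact psiI_eq v
  rw [he]
  exact h

lemma continuousAt_psi_comp {h : ℂ → OnePoint ℂ} {z₀ : ℂ} (hm : SphMeromorphicAt h z₀) :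
    ContinuousAt (fun z => psi (h z)) z₀ := by
  rcases hm with ⟨g, hg, he⟩ | ⟨g, hg, he⟩
  · apply ContinuousAt.congr (continuous_psiC.continuousAt.comp hg.continuousAt)
    filter_upwards [he] with w hw
    rw [Function.comp_apply, psiC, hw]
  · apply ContinuousAt.congr (continuous_psiI.continuousAt.comp hg.continuousAt)
    filter_upwards [he] with w hw
    rw [Function.comp_apply, psiI, hw]

lemma continuousAt_sphDist_comp {h : ℂ → OnePoint ℂ} {c : ℂ → ℂ} {z₀ : ℂ}
    (hm : SphMeromorphicAt h z₀) (hc : ContinuousAt c z₀) :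
    ContinuousAt (fun z => sphDist (h z) ((c z : ℂ) : OnePoint ℂ)) z₀ := by
  have h1 : (fun z => sphDist (h z) ((c z : ℂ) : OnePoint ℂ)) =
      fun z => dist (psi (h z)) (psiC (c z)) := funext fun z => sphDist_eq _ _
  rw [h1]
  exact (continuousAt_psi_comp hm).dist (continuous_psiC.continuousAt.comp hc)

/-- On a compact set where meromorphic `h` avoids the continuous function `c`, the chordal
distance is bounded below. -/
lemma exists_min_sphDist {h : ℂ → OnePoint ℂ} {c : ℂ → ℂ} {K : Set ℂ}
    (hK : IsCompact K) (hne : K.Nonempty)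
    (hm : ∀ z ∈ K, SphMeromorphicAt h z) (hc : ∀ z ∈ K, ContinuousAt c z)
    (hav : ∀ z ∈ K, h z ≠ ((c z : ℂ) : OnePoint ℂ)) :
    ∃ m : ℝ, 0 < m ∧ ∀ z ∈ K, m ≤ sphDist (h z) ((c z : ℂ) : OnePoint ℂ) := by
  have hcont : ContinuousOn (fun z => sphDist (h z) ((c z : ℂ) : OnePoint ℂ)) K := fun z hz =>
    (continuousAt_sphDist_comp (hm z hz) (hc z hz)).continuousWithinAt
  obtain ⟨z₀, hz₀, hmin⟩ := hK.exists_isMinOn hne hcont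
  refine ⟨sphDist (h z₀) ((c z₀ : ℂ) : OnePoint ℂ), ?_, fun z hz => hmin hz⟩
  rcases (sphDist_nonneg (h z₀) ((c z₀ : ℂ) : OnePoint ℂ)).lt_or_eq with hlt | heq
  · exact hlt
  · exact absurd (eq_of_sphDist_eq_zero heq.symm) (hav z₀ hz₀)

end SphAux

namespace SphAux

/-- Generic propagation of a locally-rigid property over an open preconnected set. -/
lemma propagate {D : Set ℂ} (hD : IsOpen D) (hDc : IsPreconnected D) {p : ℂ → Prop}
    (hdich : ∀ z ∈ D, (∃ᶠ w in nhdsWithin z {z}ᶜ, p w) → ∀ᶠ w in nhds z, p w)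
    {z₀ : ℂ} (hz₀ : z₀ ∈ D) (hfreq : ∃ᶠ w in nhdsWithin z₀ {z₀}ᶜ, p w) :
    ∀ z ∈ D, p z := by
  set V : Set ℂ := {z | ∀ᶠ w in nhds z, p w} with hV
  have hVopen : IsOpen V := isOpen_setOf_eventually_nhds
  have hstep3 : ∀ z ∈ D, z ∈ closure V → z ∈ V := by
    intro z hzD hzcl
    by_cases hzV : z ∈ V
    · exact hzV
    · apply hdich z hzD
      have h1 : ∃ᶠ w in nhds z, w ∈ V := mem_closure_iff_frequently.mp hzcl
      have h2 : ∃ᶠ w in nhdsWithin z {z}ᶜ, w ∈ V := by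
        rw [frequently_nhdsWithin_iff]
        apply h1.mono
        intro w hw
        refine ⟨hw, ?_⟩
        intro hwz
        rw [Set.mem_singleton_iff] at hwz
        exact hzV (hwz ▸ hw)
      apply h2.mono
      intro w hw
      exact hw.self_of_nhds
  have hsub : D ⊆ V ∪ (closure V)ᶜ := by
    intro z hz
    by_cases hzc : z ∈ closure V
    · exact Or.inl (hstep3 z hz hzc)
    · exact Or.inr hzc
  have hdisj : Disjoint V (closure V)ᶜ :=
    Set.disjoint_left.2 fun z hzV hzc => hzc (subset_closure hzV)
  have hne : (D ∩ V).Nonempty := ⟨z₀, hz₀, hdich z₀ hz₀ hfreq⟩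
  have hDV : D ⊆ V := hDc.subset_left_of_subset_union hVopen (isClosed_closure.isOpen_compl)
    hdisj hsub hne
  intro z hz
  exact (hDV hz).self_of_nhds

/-- Local dichotomy for the property `h = c` at a point where `h` is meromorphic. -/
lemma dichotomy_eq {h : ℂ → OnePoint ℂ} {c : ℂ → ℂ} {z : ℂ}
    (hm : SphMeromorphicAt h z) (hc : AnalyticAt ℂ c z)
    (hfreq : ∃ᶠ w in nhdsWithin z {z}ᶜ, h w = ((c w : ℂ) : OnePoint ℂ)) :
    ∀ᶠ w in nhds z, h w = ((c w : ℂ) : OnePoint ℂ) := by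
  rcases hm with ⟨g, hg, he⟩ | ⟨g, hg, he⟩
  · have hψ : AnalyticAt ℂ (fun w => g w - c w) z := hg.sub hc
    have hfz : ∃ᶠ w in nhdsWithin z {z}ᶜ, g w - c w = 0 := by
      have := hfreq.and_eventually (he.filter_mono nhdsWithin_le_nhds)
      apply this.mono
      rintro w ⟨h1, h2⟩
      rw [h2] at h1
      rw [sub_eq_zero]
      exact OnePoint.coe_injective h1
    rcases hψ.eventually_eq_zero_or_eventually_ne_zero with hev | hev
    · filter_upwards [he, hev] with w h1 h2
      rw [h1, sub_eq_zero.mp h2]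
    · exfalso
      rcases (hfz.and_eventually hev).exists with ⟨w, hw1, hw2⟩
      exact hw2 hw1
  · have hψ : AnalyticAt ℂ (fun w => 1 - c w * g w) z := analyticAt_const.sub (hc.mul hg)
    have hfz : ∃ᶠ w in nhdsWithin z {z}ᶜ, 1 - c w * g w = 0 := by
      have := hfreq.and_eventually (he.filter_mono nhdsWithin_le_nhds)
      apply this.mono
      rintro w ⟨h1, h2⟩
      by_cases hgw : g w = 0
      · rw [h2, hgw, sphInv_coe_zero] at h1
        exact absurd h1.symm (OnePoint.coe_ne_infty _)
      · rw [h2, sphInv_coe_ne_zero hgw] at h1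
        have h3 : (g w)⁻¹ = c w := OnePoint.coe_injective h1
        rw [sub_eq_zero]
        rw [← h3, inv_mul_cancel₀ hgw]
    rcases hψ.eventually_eq_zero_or_eventually_ne_zero with hev | hev
    · filter_upwards [he, hev] with w h1 h2
      have hgw : g w ≠ 0 := by
        intro hg0
        rw [hg0, mul_zero, sub_zero] at h2
        exact one_ne_zero h2
      rw [h1, sphInv_coe_ne_zero hgw]
      congr 1
      have : c w * g w = 1 := by linear_combination -h2
      exact (eq_inv_of_mul_eq_one_left this).symm
    · exfalso
      rcases (hfz.and_eventually hev).exists with ⟨w, hw1, hw2⟩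
      exact hw2 hw1

/-- Local dichotomy for the property `h = ∞`. -/
lemma dichotomy_infty {h : ℂ → OnePoint ℂ} {z : ℂ} (hm : SphMeromorphicAt h z)
    (hfreq : ∃ᶠ w in nhdsWithin z {z}ᶜ, h w = ∞) :
    ∀ᶠ w in nhds z, h w = ∞ := by
  rcases hm with ⟨g, hg, he⟩ | ⟨g, hg, he⟩
  · exfalso
    have := hfreq.and_eventually (he.filter_mono nhdsWithin_le_nhds)
    rcases this.exists with ⟨w, h1, h2⟩
    rw [h2] at h1
    exact OnePoint.coe_ne_infty _ h1
  · have hfz : ∃ᶠ w in nhdsWithin z {z}ᶜ, g w = 0 := by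
      have := hfreq.and_eventually (he.filter_mono nhdsWithin_le_nhds)
      apply this.mono
      rintro w ⟨h1, h2⟩
      by_contra hgw
      rw [h2, sphInv_coe_ne_zero hgw] at h1
      exact OnePoint.coe_ne_infty _ h1
    rcases hg.eventually_eq_zero_or_eventually_ne_zero with hev | hev
    · filter_upwards [he, hev] with w h1 h2
      rw [h1, h2, sphInv_coe_zero]
    · exfalso
      rcases (hfz.and_eventually hev).exists with ⟨w, hw1, hw2⟩
      exact hw2 hw1

/-- The punctured unit disk is preconnected. -/
lemma isPreconnected_punctured : IsPreconnected (ball (0:ℂ) 1 \ {0}) := by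
  have hrank : 1 < Module.rank ℝ ℂ := by
    rw [Complex.rank_real_complex]; norm_num
  set S : Set ℂ := (fun t : ℝ => (t : ℂ)) '' Ioo 0 1 with hS
  have hScon : IsPreconnected S :=
    (isPreconnected_Ioo).image _ (Complex.continuous_ofReal.continuousOn)
  have hhalf : ((1/2 : ℝ) : ℂ) ∈ S := ⟨1/2, by norm_num, rfl⟩
  set c : Set (Set ℂ) := {U | ∃ t : ℝ, t ∈ Ioo (0:ℝ) 1 ∧ U = S ∪ sphere (0:ℂ) t} with hc
  have hcon : IsPreconnected (⋃₀ c) := by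
    apply isPreconnected_sUnion ((1/2 : ℝ) : ℂ)
    · rintro U ⟨t, ht, rfl⟩
      exact Or.inl hhalf
    · rintro U ⟨t, ht, rfl⟩
      apply IsPreconnected.union ((t : ℝ) : ℂ)
      · exact ⟨t, ht, rfl⟩
      · rw [mem_sphere_iff_norm]
        rw [sub_zero, Complex.norm_real, Real.norm_eq_abs, abs_of_pos ht.1]
      · exact hScon
      · exact isPreconnected_sphere hrank 0 t
  have heq : ⋃₀ c = ball (0:ℂ) 1 \ {0} := by
    apply Set.eq_of_subset_of_subset
    · rintro z ⟨U, ⟨t, ht, rfl⟩, hz⟩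
      rcases hz with hz | hz
      · rcases hz with ⟨u, hu, rfl⟩
        constructor
        · rw [mem_ball_zero_iff, Complex.norm_real, Real.norm_eq_abs, abs_of_pos hu.1]
          exact hu.2
        · simp only [Set.mem_singleton_iff]
          intro hzero
          have : u = 0 := by exact_mod_cast hzero
          exact hu.1.ne' this
      · rw [mem_sphere_iff_norm, sub_zero] at hz
        constructor
        · rw [mem_ball_zero_iff, hz]; exact ht.2
        · simp only [Set.mem_singleton_iff]
          intro hzero
          rw [hzero, norm_zero] at hz
          exact ht.1.ne' hz.symm
    · rintro z ⟨hz1, hz2⟩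
      rw [mem_ball_zero_iff] at hz1
      have hz0 : z ≠ 0 := fun h => hz2 (by rw [h]; exact Set.mem_singleton 0)
      have hnorm : 0 < ‖z‖ := norm_pos_iff.2 hz0
      refine ⟨S ∪ sphere (0:ℂ) ‖z‖, ⟨‖z‖, ⟨hnorm, hz1⟩, rfl⟩, Or.inr ?_⟩
      rw [mem_sphere_iff_norm, sub_zero]
  rw [← heq]
  exact hcon

/-- Radius selection outside a countable family of finite bad sets. -/
lemma exists_good_radius {E : ℕ → Set ℂ} (hE : ∀ k, (E k).Finite) :
    ∃ ρ : ℝ, 0 < ρ ∧ ρ ≤ 1/2 ∧ ∀ k, ∀ z ∈ E k, ‖z‖ ≠ ρ := by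
  by_contra hcon
  push_neg at hcon
  have hsub : Ioc (0:ℝ) (1/2) ⊆ ⋃ k, (‖·‖) '' E k := by
    intro ρ hρ
    obtain ⟨k, z, hz, habs⟩ := hcon ρ hρ.1 hρ.2
    exact Set.mem_iUnion.2 ⟨k, z, hz, habs⟩
  have hcount : (⋃ k, (‖·‖) '' E k).Countable :=
    Set.countable_iUnion fun k => ((hE k).image _).countable
  have hzero := hcount.measure_zero (MeasureTheory.volume : MeasureTheory.Measure ℝ)
  have hle : (MeasureTheory.volume : MeasureTheory.Measure ℝ) (Ioc (0:ℝ) (1/2)) ≤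
      (MeasureTheory.volume : MeasureTheory.Measure ℝ) (⋃ k, (‖·‖) '' E k) :=
    MeasureTheory.measure_mono hsub
  rw [hzero, Real.volume_Ioc] at hle
  simp only [nonpos_iff_eq_zero, ENNReal.ofReal_eq_zero] at hle
  norm_num at hle

end SphAux

namespace SphAux

lemma eq_on_punctured_of_no_circle {h : ℂ → OnePoint ℂ} {c : ℂ → ℂ}
    (hm : ∀ z ∈ ball (0:ℂ) 1 \ {0}, SphMeromorphicAt h z)
    (hc : ∀ z ∈ ball (0:ℂ) 1, AnalyticAt ℂ c z)
    (hnoP : ∀ ρ : ℝ, 0 < ρ → ρ ≤ 1/2 → ∃ z ∈ sphere (0:ℂ) ρ, h z = ((c z : ℂ) : OnePoint ℂ)) :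
    ∀ z ∈ ball (0:ℂ) 1 \ {0}, h z = ((c z : ℂ) : OnePoint ℂ) := by
  set E : ℕ → Set ℂ := fun k =>
    {z : ℂ | ‖z‖ ≤ 1/2 ∧ 1/(k+1:ℝ) ≤ ‖z‖ ∧ h z = ((c z : ℂ) : OnePoint ℂ)}
    with hE
  have hinf : ∃ k, (E k).Infinite := by
    by_contra hfin
    push_neg at hfin
    obtain ⟨ρ, hρ0, hρhalf, hρav⟩ := exists_good_radius hfin
    obtain ⟨z, hzs, hzeq⟩ := hnoP ρ hρ0 hρhalf
    rw [mem_sphere_iff_norm, sub_zero] at hzs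
    obtain ⟨n, hn⟩ := exists_nat_one_div_lt hρ0
    have hzE : z ∈ E n := by
      refine ⟨?_, ?_, hzeq⟩
      · rw [show ‖z‖ = ‖z‖ from rfl, hzs]; exact hρhalf
      · rw [show ‖z‖ = ‖z‖ from rfl, hzs]
        exact_mod_cast hn.le
    exact hρav n z hzE (by rw [show ‖z‖ = ‖z‖ from rfl, hzs])
  obtain ⟨k, hk⟩ := hinf
  have hKcomp : IsCompact (closedBall (0:ℂ) (1/2) ∩ {z : ℂ | 1/(k+1:ℝ) ≤ ‖z‖}) := by
    apply (isCompact_closedBall (0:ℂ) (1/2)).inter_right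
    have : Continuous (fun z : ℂ => ‖z‖) := continuous_norm
    exact isClosed_le continuous_const this
  have hsubK : E k ⊆ closedBall (0:ℂ) (1/2) ∩ {z : ℂ | 1/(k+1:ℝ) ≤ ‖z‖} := by
    rintro z ⟨h1, h2, _⟩
    exact ⟨by rw [mem_closedBall_zero_iff]; exact h1, h2⟩
  obtain ⟨zs, hzsK, hacc⟩ := hk.exists_accPt_of_subset_isCompact hKcomp hsubK
  have hzsD : zs ∈ ball (0:ℂ) 1 \ {0} := by
    rcases hzsK with ⟨h1, h2⟩
    rw [mem_closedBall_zero_iff] at h1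
    constructor
    · rw [mem_ball_zero_iff]; linarith
    · simp only [Set.mem_singleton_iff]
      intro h0
      rw [h0] at h2
      simp only [Set.mem_setOf_eq, norm_zero] at h2
      have : (0:ℝ) < 1/(k+1:ℝ) := by positivity
      linarith
  have hfreq : ∃ᶠ w in nhdsWithin zs {zs}ᶜ, h w = ((c w : ℂ) : OnePoint ℂ) := by
    have h1 := (accPt_iff_frequently (x := zs) (C := E k)).mp hacc
    rw [frequently_nhdsWithin_iff]
    apply h1.mono
    rintro w ⟨hne, hwE⟩
    exact ⟨hwE.2.2, fun hmem => hne (Set.mem_singleton_iff.mp hmem)⟩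
  apply propagate (isOpen_ball.sdiff isClosed_singleton) isPreconnected_punctured
    (fun z hz => dichotomy_eq (hm z hz) (hc z hz.1)) hzsD hfreq

/-- Pivot selection: there is a circle inside the punctured disk on which `h` avoids `a` or `b`. -/
lemma exists_pivot_circle {h : ℂ → OnePoint ℂ} {a b : ℂ → ℂ}
    (hm : ∀ z ∈ ball (0:ℂ) 1 \ {0}, SphMeromorphicAt h z)
    (ha : ∀ z ∈ ball (0:ℂ) 1, AnalyticAt ℂ a z) (hb : ∀ z ∈ ball (0:ℂ) 1, AnalyticAt ℂ b z)
    (hab : ¬ Set.EqOn a b (ball (0:ℂ) 1)) :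
    ∃ c : ℂ → ℂ, (∀ z ∈ ball (0:ℂ) 1, AnalyticAt ℂ c z) ∧ (c = a ∨ c = b) ∧
      ∃ ρ : ℝ, 0 < ρ ∧ ρ ≤ 1/2 ∧ ∀ z ∈ sphere (0:ℂ) ρ, h z ≠ ((c z : ℂ) : OnePoint ℂ) := by
  by_contra hcon
  push_neg at hcon
  have hPa := hcon a ha (Or.inl rfl)
  have hPb := hcon b hb (Or.inr rfl)
  have hQa : ∀ z ∈ ball (0:ℂ) 1 \ {0}, h z = ((a z : ℂ) : OnePoint ℂ) := by
    apply eq_on_punctured_of_no_circle hm ha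
    intro ρ hρ0 hρh
    obtain ⟨z, hz1, hz2⟩ := hPa ρ hρ0 hρh
    exact ⟨z, hz1, hz2⟩
  have hQb : ∀ z ∈ ball (0:ℂ) 1 \ {0}, h z = ((b z : ℂ) : OnePoint ℂ) := by
    apply eq_on_punctured_of_no_circle hm hb
    intro ρ hρ0 hρh
    obtain ⟨z, hz1, hz2⟩ := hPb ρ hρ0 hρh
    exact ⟨z, hz1, hz2⟩
  have heq : ∀ z ∈ ball (0:ℂ) 1 \ {0}, a z = b z := by
    intro z hz
    have h1 := hQa z hz
    have h2 := hQb z hz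
    rw [h1] at h2
    exact OnePoint.coe_injective h2
  apply hab
  intro z hz
  by_cases hz0 : z = 0
  · subst hz0
    -- continuity argument along the sequence 1/(n+2)
    set u : ℕ → ℂ := fun n => ((1/(n+2:ℝ) : ℝ) : ℂ) with hu
    have huD : ∀ n, u n ∈ ball (0:ℂ) 1 \ {0} := by
      intro n
      have h2 : (0:ℝ) < 1/(n+2:ℝ) := by positivity
      have h3 : 1/(n+2:ℝ) ≤ 1/2 := by
        apply div_le_div_of_nonneg_left (by norm_num) (by norm_num)
        · norm_num
      constructor
      · rw [mem_ball_zero_iff, Complex.norm_real, Real.norm_eq_abs, abs_of_pos h2]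
        linarith
      · simp only [Set.mem_singleton_iff]
        intro h0
        rw [hu] at h0
        have : (1/(n+2:ℝ) : ℝ) = 0 := by
          have := Complex.ofReal_eq_zero.mp h0
          exact this
        linarith
    have hulim : Filter.Tendsto u Filter.atTop (nhds 0) := by
      rw [hu]
      rw [show ((0:ℂ)) = ((0:ℝ):ℂ) by norm_num]
      apply Filter.Tendsto.comp Complex.continuous_ofReal.continuousAt
      have := tendsto_one_div_add_atTop_nhds_zero_nat (𝕜 := ℝ)
      have h2 : Filter.Tendsto (fun n : ℕ => (n:ℝ) + 2) Filter.atTop Filter.atTop := by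
        apply Filter.tendsto_atTop_add_const_right
        exact tendsto_natCast_atTop_atTop
      exact Filter.Tendsto.comp tendsto_inv_atTop_zero h2 |>.congr (fun n => by
        simp [one_div])
    have hca : ContinuousAt a 0 := (ha 0 (by simp)).continuousAt
    have hcb : ContinuousAt b 0 := (hb 0 (by simp)).continuousAt
    have hta : Filter.Tendsto (fun n => a (u n)) Filter.atTop (nhds (a 0)) :=
      hca.tendsto.comp hulim
    have htb : Filter.Tendsto (fun n => b (u n)) Filter.atTop (nhds (b 0)) :=
      hcb.tendsto.comp hulim
    have heq2 : (fun n => a (u n)) = (fun n => b (u n)) := funext fun n => heq (u n) (huD n)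
    rw [heq2] at hta
    exact tendsto_nhds_unique hta htb
  · exact heq z ⟨hz, fun hmem => hz0 (Set.mem_singleton_iff.mp hmem)⟩

end SphAux

namespace SphAux

/-- Uniform spherical convergence on a circle transfers to uniform euclidean convergence of the
inverted representatives. -/
lemma circle_euclid_conv {F : ℕ → ℂ → OnePoint ℂ} {h : ℂ → OnePoint ℂ} {c : ℂ → ℂ} {C : Set ℂ}
    {m B : ℝ} (hm0 : 0 < m) (hB : 0 ≤ B)
    (hcB : ∀ z ∈ C, Complex.normSq (c z) ≤ B)
    (hdist : ∀ z ∈ C, m ≤ sphDist (h z) ((c z : ℂ) : OnePoint ℂ))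
    (havF : ∀ n : ℕ, ∀ z ∈ C, F n z ≠ ((c z : ℂ) : OnePoint ℂ))
    (havh : ∀ z ∈ C, h z ≠ ((c z : ℂ) : OnePoint ℂ))
    (hconv : ∀ ε > 0, ∃ N, ∀ n ≥ N, ∀ z ∈ C, sphDist (F n z) (h z) < ε) :
    ∀ ε > 0, ∃ N, ∀ n ≥ N, ∀ z ∈ C, ‖invRep (F n) c z - invRep h c z‖ < ε := by
  set K : ℝ := 2 * (1 + B) with hK
  have hKpos : 0 < K := by rw [hK]; linarith
  have hK2 : 2 ≤ K := by rw [hK]; linarith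
  set m' : ℝ := m / K with hm'
  have hm'pos : 0 < m' := div_pos hm0 hKpos
  set M' : ℝ := 4 / m' with hM'
  have hM'pos : 0 < M' := by positivity
  have hKz : ∀ z ∈ C, 2 * (1 + Complex.normSq (c z)) ≤ K := by
    intro z hz
    have := hcB z hz
    rw [hK]; linarith
  have hKzpos : ∀ z : ℂ, 0 < 2 * (1 + Complex.normSq (c z)) := by
    intro z
    have := Complex.normSq_nonneg (c z)
    linarith
  -- lower bound on sphDist (invRep h) ∞
  have hlow : ∀ z ∈ C, m' ≤ sphDist ((invRep h c z : ℂ) : OnePoint ℂ) ∞ := by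
    intro z hz
    have h1 := sphDist_invRep_infty (havh z hz)
    have h2 := hdist z hz
    have h3 := hKz z hz
    have h4 := hKzpos z
    have h5 := sphDist_nonneg ((invRep h c z : ℂ) : OnePoint ℂ) ∞
    rw [hm', div_le_iff₀ hKpos]
    nlinarith
  have hhM : ∀ z ∈ C, ‖invRep h c z‖ ≤ M' := by
    intro z hz
    have h1 := abs_le_of_sphDist_infty hm'pos (hlow z hz)
    have h2 : 2 / m' ≤ M' := by
      rw [hM', div_le_div_iff₀ hm'pos hm'pos]
      nlinarith
    exact le_trans h1 h2
  intro ε hε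
  set η : ℝ := min (m' / (2 * K)) (ε / ((1 + M' ^ 2) * K + 1)) with hη
  have hηpos : 0 < η := by
    apply lt_min
    · positivity
    · positivity
  obtain ⟨N, hN⟩ := hconv η hηpos
  refine ⟨N, fun n hn z hz => ?_⟩
  have hd : sphDist (F n z) (h z) < η := hN n hn z hz
  have he : sphDist ((invRep (F n) c z : ℂ) : OnePoint ℂ) ((invRep h c z : ℂ) : OnePoint ℂ) ≤
      K * η := by
    have h1 := sphDist_invRep_le (havF n z hz) (havh z hz)
    have h3 := hKz z hz
    have h4 := hKzpos z
    have h5 := sphDist_nonneg (F n z) (h z)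
    nlinarith
  -- lower bound for invRep (F n)
  have hlowF : m' / 2 ≤ sphDist ((invRep (F n) c z : ℂ) : OnePoint ℂ) ∞ := by
    have htri := sphDist_triangle ((invRep h c z : ℂ) : OnePoint ℂ)
      ((invRep (F n) c z : ℂ) : OnePoint ℂ) ∞
    have h1 := hlow z hz
    have h2 : sphDist ((invRep h c z : ℂ) : OnePoint ℂ) ((invRep (F n) c z : ℂ) : OnePoint ℂ) ≤
        K * η := by rw [sphDist_comm]; exact he
    have h3 : K * η ≤ m' / 2 := by
      have : η ≤ m' / (2 * K) := min_le_left _ _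
      calc K * η ≤ K * (m' / (2 * K)) := by nlinarith
        _ = m' / 2 := by field_simp
    linarith
  have hFM : ‖invRep (F n) c z‖ ≤ M' := by
    have h1 := abs_le_of_sphDist_infty (by positivity : (0:ℝ) < m'/2) hlowF
    rw [hM']
    calc ‖invRep (F n) c z‖ ≤ 2 / (m'/2) := h1
      _ = 4 / m' := by field_simp; ring
  have hfinal := abs_sub_le_of_sphDist hFM (hhM z hz)
  have h2 : (1 + M' ^ 2) * (K * η) < ε := by
    have h3 : η ≤ ε / ((1 + M' ^ 2) * K + 1) := min_le_right _ _
    have h4 : 0 < (1 + M' ^ 2) * K + 1 := by positivity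
    have h5 : (1 + M' ^ 2) * K * η ≤ (1 + M' ^ 2) * K * (ε / ((1 + M' ^ 2) * K + 1)) := by
      apply mul_le_mul_of_nonneg_left h3 (by positivity)
    have h6 : (1 + M' ^ 2) * K * (ε / ((1 + M' ^ 2) * K + 1)) < ε := by
      rw [← mul_div_assoc, div_lt_iff₀ h4]
      nlinarith
    nlinarith
  have h7 : (1 + M' ^ 2) * sphDist ((invRep (F n) c z : ℂ) : OnePoint ℂ)
      ((invRep h c z : ℂ) : OnePoint ℂ) ≤ (1 + M' ^ 2) * (K * η) := by
    apply mul_le_mul_of_nonneg_left he (by positivity)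
  linarith

end SphAux

namespace SphAux

/-- Maximum principle: uniform convergence on the boundary circle propagates into the disk,
with a holomorphic limit. -/
lemma circle_to_disk_conv {s : ℕ → ℂ → ℂ} {sbd : ℂ → ℂ} {ρ : ℝ} (hρ : 0 < ρ)
    (hdiff : ∀ n, DifferentiableOn ℂ (s n) (closedBall (0:ℂ) ρ))
    (hconv : ∀ ε > 0, ∃ N, ∀ n ≥ N, ∀ z ∈ sphere (0:ℂ) ρ, ‖s n z - sbd z‖ < ε) :
    ∃ S : ℂ → ℂ, DifferentiableOn ℂ S (ball (0:ℂ) ρ) ∧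
      (∀ ε > 0, ∃ N, ∀ n ≥ N, ∀ z ∈ closedBall (0:ℂ) ρ, ‖s n z - S z‖ < ε) := by
  have hcl : closure (ball (0:ℂ) ρ) = closedBall (0:ℂ) ρ := closure_ball 0 hρ.ne'
  have hfr : frontier (ball (0:ℂ) ρ) = sphere (0:ℂ) ρ := frontier_ball 0 hρ.ne'
  -- uniform Cauchy property on the closed ball
  have hUC : ∀ ε > 0, ∃ N, ∀ m ≥ N, ∀ n ≥ N, ∀ z ∈ closedBall (0:ℂ) ρ,
      ‖s m z - s n z‖ ≤ ε := by
    intro ε hε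
    obtain ⟨N, hN⟩ := hconv (ε/2) (by positivity)
    refine ⟨N, fun m hm n hn z hz => ?_⟩
    have hd : DiffContOnCl ℂ (fun w => s m w - s n w) (ball (0:ℂ) ρ) := by
      apply DifferentiableOn.diffContOnCl
      rw [hcl]
      exact (hdiff m).sub (hdiff n)
    have hb : ∀ w ∈ frontier (ball (0:ℂ) ρ), ‖s m w - s n w‖ ≤ ε := by
      intro w hw
      rw [hfr] at hw
      have h1 := hN m hm w hw
      have h2 := hN n hn w hw
      have : ‖s m w - s n w‖ ≤ ‖s m w - sbd w‖ +
          ‖sbd w - s n w‖ := by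
        calc ‖s m w - s n w‖
            = ‖(s m w - sbd w) + (sbd w - s n w)‖ := by ring_nf
          _ ≤ _ := norm_add_le _ _
      rw [show ‖sbd w - s n w‖ = ‖s n w - sbd w‖ from
        norm_sub_rev _ _] at this
      calc ‖s m w - s n w‖ = ‖s m w - s n w‖ := rfl
        _ ≤ ‖s m w - sbd w‖ + ‖s n w - sbd w‖ := this
        _ ≤ ε/2 + ε/2 := add_le_add h1.le h2.le
        _ = ε := by ring
    have := Complex.norm_le_of_forall_mem_frontier_norm_le isBounded_ball hd hb
      (by rw [hcl]; exact hz)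
    exact this
  -- pointwise limits
  have hCS : ∀ z ∈ closedBall (0:ℂ) ρ, CauchySeq (fun n => s n z) := by
    intro z hz
    rw [Metric.cauchySeq_iff']
    intro ε hε
    obtain ⟨N, hN⟩ := hUC (ε/2) (by positivity)
    refine ⟨N, fun n hn => ?_⟩
    have := hN n hn N le_rfl z hz
    rw [Complex.dist_eq]
    calc ‖s n z - s N z‖ ≤ ε/2 := this
      _ < ε := by linarith
  set S : ℂ → ℂ := fun z => limUnder Filter.atTop (fun n => s n z) with hS
  have hpt : ∀ z ∈ closedBall (0:ℂ) ρ, Filter.Tendsto (fun n => s n z) Filter.atTop (nhds (S z)) :=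
    fun z hz => (hCS z hz).tendsto_limUnder
  have hunif : ∀ ε > 0, ∃ N, ∀ n ≥ N, ∀ z ∈ closedBall (0:ℂ) ρ,
      ‖s n z - S z‖ < ε := by
    intro ε hε
    obtain ⟨N, hN⟩ := hUC (ε/2) (by positivity)
    refine ⟨N, fun n hn z hz => ?_⟩
    have hdist : dist (s n z) (S z) ≤ ε/2 := by
      apply le_of_tendsto (tendsto_const_nhds.dist (hpt z hz))
      filter_upwards [Filter.eventually_ge_atTop N] with m hm
      rw [Complex.dist_eq]
      exact hN n hn m hm z hz
    rw [Complex.dist_eq] at hdist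
    linarith
  refine ⟨S, ?_, hunif⟩
  -- differentiability of the limit
  have htu : TendstoUniformlyOn s S Filter.atTop (closedBall (0:ℂ) ρ) := by
    rw [Metric.tendstoUniformlyOn_iff]
    intro ε hε
    obtain ⟨N, hN⟩ := hunif ε hε
    filter_upwards [Filter.eventually_ge_atTop N] with n hn
    intro z hz
    rw [dist_comm, Complex.dist_eq]
    exact hN n hn z hz
  have hloc := htu.tendstoLocallyUniformlyOn.mono (ball_subset_closedBall)
  apply hloc.differentiableOn ?_ isOpen_ball
  filter_upwards with n
  exact (hdiff n).mono ball_subset_closedBall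

lemma sphDist_coe_infty_le {v : ℂ} (hv : v ≠ 0) :
    sphDist (v : OnePoint ℂ) ∞ ≤ 2 / ‖v‖ := by
  rw [sphDist_coe_infty]
  have h1 : ‖v‖ ≤ Real.sqrt (1 + Complex.normSq v) := by
    rw [abs_eq_sqrt_normSq]
    exact Real.sqrt_le_sqrt (by linarith)
  have h2 : 0 < ‖v‖ := by
    rcases (norm_nonneg v).lt_or_eq with h | h
    · exact h
    · exact absurd (norm_eq_zero.mp h.symm) hv
  have h3 := sqrt_one_add_normSq_pos v
  rw [div_le_div_iff₀ h3 h2]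
  nlinarith

end SphAux

namespace SphAux

/-- Euclidean uniform convergence of inverted representatives gives spherical uniform
convergence of the functions themselves. -/
lemma spherical_limit {F : ℕ → ℂ → OnePoint ℂ} {s : ℕ → ℂ → ℂ} {S c : ℂ → ℂ} {K : Set ℂ} {B : ℝ}
    (hB : 0 ≤ B) (hcB : ∀ z ∈ K, ‖c z‖ ≤ B)
    (hrel : ∀ n : ℕ, ∀ z ∈ K, (s n z = 0 ∧ F n z = ∞) ∨
      (s n z ≠ 0 ∧ F n z = ((c z + (s n z)⁻¹ : ℂ) : OnePoint ℂ)))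
    (hconv : ∀ ε > 0, ∃ N, ∀ n ≥ N, ∀ z ∈ K, ‖s n z - S z‖ < ε) :
    ∀ ε > 0, ∃ N, ∀ n ≥ N, ∀ z ∈ K,
      sphDist (F n z) (if S z = 0 then ∞ else ((c z + (S z)⁻¹ : ℂ) : OnePoint ℂ)) < ε := by
  intro ε hε
  have hden : 0 < B + 8/ε := by positivity
  set δ : ℝ := 1/(2*(B + 8/ε)) with hδ
  have hδpos : 0 < δ := by positivity
  have hδval : 1/(2*δ) = B + 8/ε := by
    rw [hδ]
    field_simp
  have hkey : ∀ z ∈ K, ∀ u : ℂ, u ≠ 0 → ‖u‖ ≤ 2*δ →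
      sphDist ((c z + u⁻¹ : ℂ) : OnePoint ℂ) ∞ ≤ ε/4 := by
    intro z hz u hu hub
    have h1 : ‖u⁻¹‖ = (‖u‖)⁻¹ := norm_inv _
    have h2 : 0 < ‖u‖ := by
      rcases (norm_nonneg u).lt_or_eq with h | h
      · exact h
      · exact absurd (norm_eq_zero.mp h.symm) hu
    have h3 : 1/(2*δ) ≤ ‖u⁻¹‖ := by
      have h3' := one_div_le_one_div_of_le h2 hub
      rw [h1, ← one_div]
      exact h3'
    have h5 : ‖u⁻¹‖ - ‖c z‖ ≤ ‖c z + u⁻¹‖ := by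
      have h9 := norm_sub_norm_le (u⁻¹) (-(c z))
      simp only [norm_neg, sub_neg_eq_add] at h9
      rw [show c z + u⁻¹ = u⁻¹ + c z from add_comm _ _]
      exact h9
    have h4 : 8/ε ≤ ‖c z + u⁻¹‖ := by
      have h6 := hcB z hz
      rw [hδval] at h3
      linarith
    have h7 : (0:ℝ) < 8/ε := by positivity
    have h8 : (c z + u⁻¹ : ℂ) ≠ 0 := by
      intro h0
      rw [h0] at h4
      simp only [norm_zero] at h4
      linarith
    calc sphDist ((c z + u⁻¹ : ℂ) : OnePoint ℂ) ∞ ≤ 2 / ‖c z + u⁻¹‖ :=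
          sphDist_coe_infty_le h8
      _ ≤ 2 / (8/ε) := by
          rw [div_le_div_iff₀ (by linarith) h7]
          nlinarith
      _ = ε/4 := by field_simp; ring
  set η : ℝ := min (δ/2) (ε * δ^2 / 8) with hη
  have hηpos : 0 < η := lt_min (by positivity) (by positivity)
  obtain ⟨N, hN⟩ := hconv η hηpos
  refine ⟨N, fun n hn z hz => ?_⟩
  have hd : ‖s n z - S z‖ < η := hN n hn z hz
  have hη1 : η ≤ δ/2 := min_le_left _ _
  have hη2 : η ≤ ε * δ^2 / 8 := min_le_right _ _
  by_cases hS : S z = 0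
  · rw [if_pos hS]
    have hsb : ‖s n z‖ ≤ 2*δ := by
      rw [hS, sub_zero] at hd
      linarith
    rcases hrel n z hz with ⟨hs0, hF⟩ | ⟨hs0, hF⟩
    · rw [hF, sphDist_infty_infty]
      exact hε
    · rw [hF]
      calc sphDist ((c z + (s n z)⁻¹ : ℂ) : OnePoint ℂ) ∞ ≤ ε/4 := hkey z hz _ hs0 hsb
        _ < ε := by linarith
  · rw [if_neg hS]
    have htris : ‖s n z‖ ≤ ‖S z‖ + ‖s n z - S z‖ := by
      calc ‖s n z‖ = ‖S z + (s n z - S z)‖ := by ring_nf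
        _ ≤ _ := norm_add_le _ _
    have htriS : ‖S z‖ - ‖s n z - S z‖ ≤ ‖s n z‖ := by
      have h1 : ‖S z‖ ≤ ‖s n z‖ + ‖S z - s n z‖ := by
        calc ‖S z‖ = ‖s n z + (S z - s n z)‖ := by ring_nf
          _ ≤ _ := norm_add_le _ _
      rw [show ‖S z - s n z‖ = ‖s n z - S z‖ from
        norm_sub_rev _ _] at h1
      linarith
    by_cases hSδ : ‖S z‖ ≤ δ
    · have hG : sphDist ((c z + (S z)⁻¹ : ℂ) : OnePoint ℂ) ∞ ≤ ε/4 :=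
        hkey z hz _ hS (by linarith)
      have hsb : ‖s n z‖ ≤ 2*δ := by linarith
      rcases hrel n z hz with ⟨hs0, hF⟩ | ⟨hs0, hF⟩
      · rw [hF, sphDist_comm]
        linarith
      · rw [hF]
        have hFd : sphDist ((c z + (s n z)⁻¹ : ℂ) : OnePoint ℂ) ∞ ≤ ε/4 :=
          hkey z hz _ hs0 hsb
        have htri := sphDist_triangle ((c z + (s n z)⁻¹ : ℂ) : OnePoint ℂ) ∞
          ((c z + (S z)⁻¹ : ℂ) : OnePoint ℂ)
        rw [sphDist_comm (∞ : OnePoint ℂ)] at htri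
        linarith
    · push_neg at hSδ
      have hslow : δ/2 ≤ ‖s n z‖ := by linarith
      have hs0 : s n z ≠ 0 := by
        intro h0
        rw [h0] at hslow
        simp only [norm_zero] at hslow
        linarith
      rcases hrel n z hz with ⟨hs0', hF⟩ | ⟨_, hF⟩
      · exact absurd hs0' hs0
      · rw [hF]
        have hdiffval : (c z + (s n z)⁻¹) - (c z + (S z)⁻¹) = (S z - s n z)/(s n z * S z) := by
          rw [add_sub_add_left_eq_sub]
          exact inv_sub_inv hs0 hS
        have habs : ‖(c z + (s n z)⁻¹) - (c z + (S z)⁻¹)‖ < 4*η/δ^2 := by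
          rw [hdiffval, norm_div, norm_mul]
          rw [show ‖S z - s n z‖ = ‖s n z - S z‖ from
            norm_sub_rev _ _]
          have h2 : δ^2/2 ≤ ‖s n z‖ * ‖S z‖ := by nlinarith
          have h3 : 0 < ‖s n z‖ * ‖S z‖ := by nlinarith
          rw [div_lt_div_iff₀ h3 (by positivity : (0:ℝ) < δ^2)]
          nlinarith
        have h8 : 8*η/δ^2 ≤ ε := by
          rw [div_le_iff₀ (by positivity : (0:ℝ) < δ^2)]
          nlinarith
        calc sphDist ((c z + (s n z)⁻¹ : ℂ) : OnePoint ℂ) ((c z + (S z)⁻¹ : ℂ) : OnePoint ℂ)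
            ≤ 2 * ‖(c z + (s n z)⁻¹) - (c z + (S z)⁻¹)‖ := sphDist_coe_coe_le _ _
          _ < 2 * (4*η/δ^2) := by linarith
          _ = 8*η/δ^2 := by ring
          _ ≤ ε := h8

end SphAux

namespace SphAux

lemma sphMeromorphicAt_congr {g h : ℂ → OnePoint ℂ} {z : ℂ} (hm : SphMeromorphicAt h z)
    (he : ∀ᶠ w in nhds z, g w = h w) : SphMeromorphicAt g z := by
  rcases hm with ⟨q, hq, hqe⟩ | ⟨q, hq, hqe⟩
  · exact Or.inl ⟨q, hq, by filter_upwards [he, hqe] with w h1 h2; rw [h1, h2]⟩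
  · exact Or.inr ⟨q, hq, by filter_upwards [he, hqe] with w h1 h2; rw [h1, h2]⟩

/-- The core convergence transfer: given the circle data, build the limit on the full disk. -/
lemma main_core {f : ℕ → ℂ → OnePoint ℂ} {h : ℂ → OnePoint ℂ} {c : ℂ → ℂ} {ρ : ℝ}
    (hρ0 : 0 < ρ) (hρh : ρ ≤ 1/2)
    (hfm : ∀ n, SphMeromorphicOn (f n) (ball (0:ℂ) 1))
    (hcA : ∀ z ∈ ball (0:ℂ) 1, AnalyticAt ℂ c z)
    (hcav : ∀ n : ℕ, ∀ z ∈ ball (0:ℂ) 1, f n z ≠ ((c z : ℂ) : OnePoint ℂ))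
    (hdis : SphMeromorphicOn h (ball (0:ℂ) 1 \ {0}) ∨ ∀ z ∈ ball (0:ℂ) 1 \ {0}, h z = ∞)
    (hcirc : ∀ z ∈ sphere (0:ℂ) ρ, h z ≠ ((c z : ℂ) : OnePoint ℂ))
    (hconv : SphLocUnifOn f h (ball (0:ℂ) 1 \ {0})) :
    ∃ g : ℂ → OnePoint ℂ,
      (SphMeromorphicOn g (ball (0:ℂ) 1) ∨ ∀ z ∈ ball (0:ℂ) 1, g z = ∞) ∧
      SphLocUnifOn f g (ball (0:ℂ) 1) := by
  -- geometry
  have hsub_cb : closedBall (0:ℂ) ρ ⊆ ball (0:ℂ) 1 := by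
    intro z hz
    rw [mem_closedBall_zero_iff] at hz
    rw [mem_ball_zero_iff]
    linarith
  have hsub_sp_cb : sphere (0:ℂ) ρ ⊆ closedBall (0:ℂ) ρ := sphere_subset_closedBall
  have hsub_sphere : sphere (0:ℂ) ρ ⊆ ball (0:ℂ) 1 \ {0} := by
    intro z hz
    rw [mem_sphere_iff_norm, sub_zero] at hz
    constructor
    · rw [mem_ball_zero_iff, hz]; linarith
    · simp only [Set.mem_singleton_iff]
      intro h0
      rw [h0, norm_zero] at hz
      exact hρ0.ne' hz.symm
  have hsp_compact : IsCompact (sphere (0:ℂ) ρ) := isCompact_sphere _ _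
  have hsp_ne : (sphere (0:ℂ) ρ).Nonempty := NormedSpace.sphere_nonempty.mpr hρ0.le
  -- bound for c
  have hccont : ContinuousOn c (closedBall (0:ℂ) ρ) := fun z hz =>
    (hcA z (hsub_cb hz)).continuousAt.continuousWithinAt
  obtain ⟨B₀, hB₀⟩ := (isCompact_closedBall (0:ℂ) ρ).exists_bound_of_continuousOn hccont
  set B : ℝ := max B₀ 0 with hB
  have hB0 : (0:ℝ) ≤ B := le_max_right _ _
  have hcB : ∀ z ∈ closedBall (0:ℂ) ρ, ‖c z‖ ≤ B := fun z hz =>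
    le_trans (hB₀ z hz) (le_max_left _ _)
  have hcB2 : ∀ z ∈ sphere (0:ℂ) ρ, Complex.normSq (c z) ≤ B^2 := by
    intro z hz
    have h1 := hcB z (hsub_sp_cb hz)
    rw [← Complex.sq_norm]
    nlinarith [norm_nonneg (c z)]
  -- minimum spherical distance on the circle
  have hmdist : ∃ m : ℝ, 0 < m ∧ ∀ z ∈ sphere (0:ℂ) ρ,
      m ≤ sphDist (h z) ((c z : ℂ) : OnePoint ℂ) := by
    rcases hdis with hmero | hinf
    · exact exists_min_sphDist hsp_compact hsp_ne
        (fun z hz => hmero z (hsub_sphere hz))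
        (fun z hz => (hcA z (hsub_cb (hsub_sp_cb hz))).continuousAt) hcirc
    · refine ⟨2 / Real.sqrt (1 + B^2), by positivity, fun z hz => ?_⟩
      rw [hinf z (hsub_sphere hz), sphDist_infty_coe]
      have h1 : Real.sqrt (1 + Complex.normSq (c z)) ≤ Real.sqrt (1 + B^2) :=
        Real.sqrt_le_sqrt (by linarith [hcB2 z hz])
      have h2 := sqrt_one_add_normSq_pos (c z)
      have h3 : (0:ℝ) < Real.sqrt (1 + B^2) := Real.sqrt_pos.2 (by positivity)
      rw [div_le_div_iff₀ h3 h2]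
      nlinarith
  obtain ⟨m, hm0, hmdist⟩ := hmdist
  -- uniform convergence on the circle (spherical)
  have hconvS : ∀ ε > 0, ∃ N, ∀ n ≥ N, ∀ z ∈ sphere (0:ℂ) ρ, sphDist (f n z) (h z) < ε :=
    fun ε hε => hconv (sphere (0:ℂ) ρ) hsub_sphere hsp_compact ε hε
  -- uniform euclidean convergence of the inverted representatives on the circle
  have havF : ∀ n : ℕ, ∀ z ∈ sphere (0:ℂ) ρ, f n z ≠ ((c z : ℂ) : OnePoint ℂ) :=
    fun n z hz => hcav n z (hsub_cb (hsub_sp_cb hz))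
  have hC := circle_euclid_conv hm0 (by positivity : (0:ℝ) ≤ B^2) hcB2 hmdist havF hcirc hconvS
  -- propagate into the disk
  have hdiff : ∀ n, DifferentiableOn ℂ (invRep (f n) c) (closedBall (0:ℂ) ρ) := by
    intro n z hz
    exact (analyticAt_invRep isOpen_ball (hsub_cb hz) (hfm n z (hsub_cb hz))
      (hcA z (hsub_cb hz)) (hcav n)).differentiableAt.differentiableWithinAt
  obtain ⟨S, hSdiff, hSconv⟩ := circle_to_disk_conv hρ0 hdiff hC
  -- spherical convergence on the closed ball
  set G : ℂ → OnePoint ℂ :=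
    fun z => if S z = 0 then ∞ else ((c z + (S z)⁻¹ : ℂ) : OnePoint ℂ) with hG
  have hrel : ∀ n : ℕ, ∀ z ∈ closedBall (0:ℂ) ρ, (invRep (f n) c z = 0 ∧ f n z = ∞) ∨
      (invRep (f n) c z ≠ 0 ∧ f n z = ((c z + (invRep (f n) c z)⁻¹ : ℂ) : OnePoint ℂ)) :=
    fun n z hz => invRep_spec (hcav n z (hsub_cb hz))
  have hGconv : ∀ ε > 0, ∃ N, ∀ n ≥ N, ∀ z ∈ closedBall (0:ℂ) ρ, sphDist (f n z) (G z) < ε :=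
    spherical_limit hB0 hcB hrel hSconv
  -- pointwise agreement with h away from 0
  have hagree : ∀ z ∈ closedBall (0:ℂ) ρ, z ≠ 0 → G z = h z := by
    intro z hz hz0
    have hzD : z ∈ ball (0:ℂ) 1 \ {0} :=
      ⟨hsub_cb hz, fun hmem => hz0 (Set.mem_singleton_iff.mp hmem)⟩
    have hzK : IsCompact ({z} : Set ℂ) := isCompact_singleton
    have hptw : ∀ ε > 0, sphDist (G z) (h z) < ε := by
      intro ε hε
      obtain ⟨N₁, hN₁⟩ := hGconv (ε/2) (by positivity)
      obtain ⟨N₂, hN₂⟩ := hconv {z} (Set.singleton_subset_iff.2 hzD) hzK (ε/2) (by positivity)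
      set n := max N₁ N₂ with hn
      have h1 := hN₁ n (le_max_left _ _) z hz
      have h2 := hN₂ n (le_max_right _ _) z rfl
      have htri := sphDist_triangle (G z) (f n z) (h z)
      rw [sphDist_comm (G z) (f n z)] at htri
      linarith
    by_contra hne
    have hpos : 0 < sphDist (G z) (h z) := by
      rcases (sphDist_nonneg (G z) (h z)).lt_or_eq with h1 | h1
      · exact h1
      · exact absurd (eq_of_sphDist_eq_zero h1.symm) hne
    exact lt_irrefl _ (hptw _ hpos)
  -- the global limit function
  set g : ℂ → OnePoint ℂ := fun z => if z = 0 then G 0 else h z with hgdef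
  have hgG : ∀ z ∈ closedBall (0:ℂ) ρ, g z = G z := by
    intro z hz
    by_cases hz0 : z = 0
    · subst hz0
      show (if (0:ℂ) = 0 then G 0 else h 0) = G 0
      rw [if_pos rfl]
    · show (if z = 0 then G 0 else h z) = G z
      rw [if_neg hz0]
      exact (hagree z hz hz0).symm
  have hgh : ∀ z : ℂ, z ≠ 0 → g z = h z := by
    intro z hz0
    show (if z = 0 then G 0 else h z) = h z
    rw [if_neg hz0]
  -- convergence on the full disk
  have hloc : SphLocUnifOn f g (ball (0:ℂ) 1) := by
    intro K hK hKcomp ε hε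
    obtain ⟨N₁, hN₁⟩ := hGconv ε hε
    have hK₂comp : IsCompact (K \ ball (0:ℂ) ρ) := hKcomp.diff isOpen_ball
    have hK₂sub : K \ ball (0:ℂ) ρ ⊆ ball (0:ℂ) 1 \ {0} := by
      rintro z ⟨hz1, hz2⟩
      refine ⟨hK hz1, ?_⟩
      simp only [Set.mem_singleton_iff]
      intro h0
      apply hz2
      rw [h0, mem_ball_zero_iff, norm_zero]
      exact hρ0
    obtain ⟨N₂, hN₂⟩ := hconv _ hK₂sub hK₂comp ε hε
    refine ⟨max N₁ N₂, fun n hn z hz => ?_⟩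
    by_cases hzρ : z ∈ ball (0:ℂ) ρ
    · rw [hgG z (ball_subset_closedBall hzρ)]
      exact hN₁ n (le_trans (le_max_left _ _) hn) z (ball_subset_closedBall hzρ)
    · have hz0 : z ≠ 0 := by
        intro h0
        apply hzρ
        rw [h0, mem_ball_zero_iff, norm_zero]
        exact hρ0
      rw [hgh z hz0]
      exact hN₂ n (le_trans (le_max_right _ _) hn) z ⟨hz, hzρ⟩
  -- meromorphy (or ≡ ∞) of the limit
  have hG_infty_iff : ∀ w : ℂ, G w = ∞ ↔ S w = 0 := by
    intro w
    constructor
    · intro hw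
      by_contra hS0
      rw [show G w = ((c w + (S w)⁻¹ : ℂ) : OnePoint ℂ) from if_neg hS0] at hw
      exact OnePoint.coe_ne_infty _ hw
    · intro hS0
      exact if_pos hS0
  have hSanal : AnalyticAt ℂ S 0 := by
    have := hSdiff.analyticOnNhd isOpen_ball
    exact this 0 (by rw [mem_ball_zero_iff, norm_zero]; exact hρ0)
  have h0ball : (0:ℂ) ∈ ball (0:ℂ) 1 := by rw [mem_ball_zero_iff, norm_zero]; norm_num
  have h0ballρ : (0:ℂ) ∈ ball (0:ℂ) ρ := by rw [mem_ball_zero_iff, norm_zero]; exact hρ0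
  have hgGev : ∀ᶠ w in nhds 0, g w = G w := by
    filter_upwards [isOpen_ball.mem_nhds h0ballρ] with w hw
    exact hgG w (ball_subset_closedBall hw)
  rcases hdis with hmero | hinf
  · -- meromorphic case
    refine ⟨g, Or.inl ?_, hloc⟩
    intro z hz
    by_cases hz0 : z = 0
    · subst hz0
      apply sphMeromorphicAt_congr ?_ hgGev
      by_cases hS0 : S 0 = 0
      · -- pole-type representation
        right
        have hden : AnalyticAt ℂ (fun w => 1 + c w * S w) 0 :=
          analyticAt_const.add ((hcA 0 h0ball).mul hSanal)
        have hden0 : (fun w => 1 + c w * S w) 0 ≠ 0 := by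
          simp only [hS0, mul_zero, add_zero]
          exact one_ne_zero
        refine ⟨fun w => S w / (1 + c w * S w), ?_, ?_⟩
        · apply AnalyticAt.div hSanal hden hden0
        · have hevne : ∀ᶠ w in nhds 0, (1 + c w * S w) ≠ 0 :=
            hden.continuousAt.eventually_ne hden0
          filter_upwards [hevne] with w hwne
          by_cases hSw : S w = 0
          · rw [show G w = ∞ from if_pos hSw,
              show S w / (1 + c w * S w) = 0 by rw [hSw, zero_div], sphInv_coe_zero]
          · have hq0 : S w / (1 + c w * S w) ≠ 0 := div_ne_zero hSw hwne
            rw [show G w = ((c w + (S w)⁻¹ : ℂ) : OnePoint ℂ) from if_neg hSw,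
              sphInv_coe_ne_zero hq0]
            congr 1
            field_simp
            ring
      · -- finite-value representation
        left
        have hevne : ∀ᶠ w in nhds 0, S w ≠ 0 := hSanal.continuousAt.eventually_ne hS0
        refine ⟨fun w => c w + (S w)⁻¹, (hcA 0 h0ball).add (hSanal.inv hS0), ?_⟩
        filter_upwards [hevne] with w hwne
        exact if_neg hwne
    · -- away from the origin g agrees with h
      have hzD : z ∈ ball (0:ℂ) 1 \ {0} :=
        ⟨hz, fun hmem => hz0 (Set.mem_singleton_iff.mp hmem)⟩
      apply sphMeromorphicAt_congr (hmero z hzD)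
      filter_upwards [isOpen_compl_singleton.mem_nhds
        (by simp only [Set.mem_compl_iff, Set.mem_singleton_iff]; exact hz0)] with w hw
      exact hgh w hw
  · -- identically-∞ case
    refine ⟨g, Or.inr ?_, hloc⟩
    have hS0ball : ∀ w ∈ ball (0:ℂ) ρ, w ≠ 0 → S w = 0 := by
      intro w hw hw0
      have h1 : G w = h w := hagree w (ball_subset_closedBall hw) hw0
      have h2 : h w = ∞ := hinf w ⟨hsub_cb (ball_subset_closedBall hw),
        fun hmem => hw0 (Set.mem_singleton_iff.mp hmem)⟩
      exact (hG_infty_iff w).mp (by rw [h1, h2])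
    have hS00 : S 0 = 0 := by
      -- continuity of S at 0 together with vanishing on the punctured ball
      set u : ℕ → ℂ := fun n => ((ρ/(n+2:ℝ) : ℝ) : ℂ) with hu
      have huball : ∀ n : ℕ, u n ∈ ball (0:ℂ) ρ ∧ u n ≠ 0 := by
        intro n
        have h2 : (0:ℝ) < ρ/(n+2:ℝ) := by positivity
        have h3 : ρ/(n+2:ℝ) < ρ := by
          rw [div_lt_iff₀ (by positivity : (0:ℝ) < (n+2:ℝ))]
          nlinarith
        constructor
        · rw [mem_ball_zero_iff, hu, Complex.norm_real, Real.norm_eq_abs, abs_of_pos h2]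
          exact h3
        · intro h0
          rw [hu] at h0
          have := Complex.ofReal_eq_zero.mp h0
          linarith
      have hulim : Filter.Tendsto u Filter.atTop (nhds 0) := by
        rw [hu, show ((0:ℂ)) = ((0:ℝ):ℂ) by norm_num]
        apply Filter.Tendsto.comp Complex.continuous_ofReal.continuousAt
        have h2 : Filter.Tendsto (fun n : ℕ => (n:ℝ) + 2) Filter.atTop Filter.atTop :=
          Filter.tendsto_atTop_add_const_right _ _ tendsto_natCast_atTop_atTop
        have h3 := Filter.Tendsto.comp tendsto_inv_atTop_zero h2
        have h4 : Filter.Tendsto (fun n : ℕ => ρ * ((n:ℝ)+2)⁻¹) Filter.atTop (nhds (ρ * 0)) :=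
          Filter.Tendsto.const_mul _ h3
        rw [mul_zero] at h4
        apply h4.congr
        intro n
        rw [div_eq_mul_inv]
      have hScont : ContinuousAt S 0 :=
        (hSdiff.differentiableAt (isOpen_ball.mem_nhds h0ballρ)).continuousAt
      have h5 : Filter.Tendsto (fun n => S (u n)) Filter.atTop (nhds (S 0)) :=
        hScont.tendsto.comp hulim
      have h6 : (fun n => S (u n)) = (fun _ => (0:ℂ)) :=
        funext fun n => hS0ball (u n) (huball n).1 (huball n).2
      rw [h6] at h5
      exact tendsto_nhds_unique h5 tendsto_const_nhds
    intro z hz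
    by_cases hz0 : z = 0
    · subst hz0
      show (if (0:ℂ) = 0 then G 0 else h 0) = ∞
      rw [if_pos rfl]
      exact (hG_infty_iff 0).mpr hS00
    · rw [hgh z hz0]
      exact hinf z ⟨hz, fun hmem => hz0 (Set.mem_singleton_iff.mp hmem)⟩

end SphAux

/-- **Lemma (Chang–Fang–Zalcman).** Let `𝓕` be a family of meromorphic functions on the unit
disk `𝔻` and let `a, b` be two distinct holomorphic functions on `𝔻` such that every `f ∈ 𝓕`
satisfies `f z ≠ a z` and `f z ≠ b z` on `𝔻`. If `𝓕` is normal in `𝔻 \ {0}`, then `𝓕` is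
normal in `𝔻`. -/
theorem normal_on_disk_of_normal_on_punctured_disk_of_avoiding_two_holomorphic_functions
    (𝓕 : Set (ℂ → OnePoint ℂ))
    (h𝓕 : ∀ f ∈ 𝓕, SphMeromorphicOn f (ball (0 : ℂ) 1))
    (a b : ℂ → ℂ)
    (ha : DifferentiableOn ℂ a (ball (0 : ℂ) 1))
    (hb : DifferentiableOn ℂ b (ball (0 : ℂ) 1))
    (hab : ¬ Set.EqOn a b (ball (0 : ℂ) 1))
    (havoid : ∀ f ∈ 𝓕, ∀ z ∈ ball (0 : ℂ) 1,
      f z ≠ ((a z : ℂ) : OnePoint ℂ) ∧ f z ≠ ((b z : ℂ) : OnePoint ℂ))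
    (hnorm : SphNormalOn 𝓕 (ball (0 : ℂ) 1 \ {0})) :
    SphNormalOn 𝓕 (ball (0 : ℂ) 1) := by
  intro F hF
  obtain ⟨φ, hφ, h, hdis, hconv⟩ := hnorm F hF
  set f : ℕ → ℂ → OnePoint ℂ := fun n => F (φ n) with hf
  have hfm : ∀ n, SphMeromorphicOn (f n) (ball (0:ℂ) 1) := fun n => h𝓕 _ (hF (φ n))
  have haA : ∀ z ∈ ball (0:ℂ) 1, AnalyticAt ℂ a z :=
    fun z hz => (ha.analyticOnNhd isOpen_ball) z hz
  have hbA : ∀ z ∈ ball (0:ℂ) 1, AnalyticAt ℂ b z :=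
    fun z hz => (hb.analyticOnNhd isOpen_ball) z hz
  have hpick : ∃ c : ℂ → ℂ, (∀ z ∈ ball (0:ℂ) 1, AnalyticAt ℂ c z) ∧
      (∀ n : ℕ, ∀ z ∈ ball (0:ℂ) 1, f n z ≠ ((c z : ℂ) : OnePoint ℂ)) ∧
      ∃ ρ : ℝ, 0 < ρ ∧ ρ ≤ 1/2 ∧ ∀ z ∈ sphere (0:ℂ) ρ, h z ≠ ((c z : ℂ) : OnePoint ℂ) := by
    rcases hdis with hmero | hinf
    · obtain ⟨c, hcA, hcab, ρ, hρ0, hρh, hcirc⟩ :=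
        SphAux.exists_pivot_circle (fun z hz => hmero z hz) haA hbA hab
      refine ⟨c, hcA, ?_, ρ, hρ0, hρh, hcirc⟩
      rcases hcab with rfl | rfl
      · exact fun n z hz => (havoid _ (hF (φ n)) z hz).1
      · exact fun n z hz => (havoid _ (hF (φ n)) z hz).2
    · refine ⟨a, haA, fun n z hz => (havoid _ (hF (φ n)) z hz).1, 1/2, by norm_num,
        le_refl _, ?_⟩
      intro z hz
      have hzD : z ∈ ball (0:ℂ) 1 \ {0} := by
        rw [mem_sphere_iff_norm, sub_zero] at hz
        constructor
        · rw [mem_ball_zero_iff, hz]; norm_num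
        · simp only [Set.mem_singleton_iff]
          intro h0
          rw [h0, norm_zero] at hz
          norm_num at hz
      rw [hinf z hzD]
      exact fun heq => OnePoint.coe_ne_infty _ heq.symm
  obtain ⟨c, hcA, hcav, ρ, hρ0, hρh, hcirc⟩ := hpick
  obtain ⟨g, hgdis, hgloc⟩ := SphAux.main_core hρ0 hρh hfm hcA hcav hdis hcirc hconv
  exact ⟨φ, hφ, g, hgdis, hgloc⟩
end
end

section
/- Let z₀ ∈ ℂ, r > 0, and let (gₙ) be a sequence of meromorphic functions on the disk D_r(z₀) = {z : |z − z₀| < r} such that each gₙ is zero-free on D_{r/2}(z₀) (i.e., gₙ(z) ≠ 0 for all z with |z − z₀| < r/2). If (gₙ) converges locally uniformly, with respect to the spherical metric, to the constant ∞ on the punctured disk D_r(z₀) \ {z₀}, then (gₙ) converges locally uniformly to ∞ on the full disk D_{r/2}(z₀). -/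
open OnePoint Metric Filter Complex Set

noncomputable section

lemma sphToC_coe (c : ℂ) : sphToC (c : OnePoint ℂ) = c := rfl

lemma sphInv_infty' : sphInv (∞ : OnePoint ℂ) = ((0 : ℂ) : OnePoint ℂ) := by
  simp [sphInv]

lemma sphInv_coe_zero' : sphInv ((0 : ℂ) : OnePoint ℂ) = ∞ := by
  simp [sphInv, OnePoint.coe_ne_infty, sphToC_coe]

lemma sphInv_coe_of_ne' {c : ℂ} (hc : c ≠ 0) :
    sphInv (c : OnePoint ℂ) = ((c⁻¹ : ℂ) : OnePoint ℂ) := by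
  simp [sphInv, OnePoint.coe_ne_infty, sphToC_coe, hc]

lemma sphInv_sphInv_coe' (c : ℂ) : sphInv (sphInv (c : OnePoint ℂ)) = (c : OnePoint ℂ) := by
  by_cases hc : c = 0
  · subst hc; rw [sphInv_coe_zero', sphInv_infty']
  · rw [sphInv_coe_of_ne' hc, sphInv_coe_of_ne' (inv_ne_zero hc), inv_inv]

lemma analyticAt_invPart' {f : ℂ → OnePoint ℂ} {z : ℂ}
    (hm : SphMeromorphicAt f z) (hz : f z ≠ ((0 : ℂ) : OnePoint ℂ)) :
    AnalyticAt ℂ (fun w => sphToC (sphInv (f w))) z := by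
  rcases hm with ⟨φ, hφ, hev⟩ | ⟨φ, hφ, hev⟩
  · have hφz : φ z ≠ 0 := by
      intro h0
      exact hz (by rw [hev.self_of_nhds, h0])
    have hne : ∀ᶠ w in nhds z, φ w ≠ 0 :=
      hφ.continuousAt.eventually_ne hφz
    refine (hφ.inv hφz).congr ?_
    filter_upwards [hev, hne] with w hw hwne
    rw [hw, sphInv_coe_of_ne' hwne, sphToC_coe, Pi.inv_apply]
  · refine hφ.congr ?_
    filter_upwards [hev] with w hw
    rw [hw, sphInv_sphInv_coe', sphToC_coe]

lemma sphDist_coe_infty' (w : ℂ) :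
    sphDist (w : OnePoint ℂ) ∞ = 2 / Real.sqrt (1 + ‖w‖ ^ 2) := by
  simp [sphDist, OnePoint.coe_ne_infty, sphToC_coe]

lemma sphDist_infty_le' {p : OnePoint ℂ} (hp : p ≠ ((0 : ℂ) : OnePoint ℂ)) :
    sphDist p ∞ ≤ 2 * ‖sphToC (sphInv p)‖ := by
  by_cases hpi : p = ∞
  · subst hpi
    simp [sphDist, sphInv_infty', sphToC_coe]
  · obtain ⟨w, rfl⟩ := OnePoint.ne_infty_iff_exists.mp hpi
    have hw : w ≠ 0 := fun h => hp (by rw [h])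
    have hwp : 0 < ‖w‖ := by simpa using hw
    rw [sphInv_coe_of_ne' hw, sphToC_coe, sphDist_coe_infty', norm_inv]
    have h1 : ‖w‖ ≤ Real.sqrt (1 + ‖w‖ ^ 2) := by
      nlinarith [Real.sq_sqrt (by positivity : (0:ℝ) ≤ 1 + ‖w‖ ^ 2),
        Real.sqrt_nonneg (1 + ‖w‖ ^ 2), norm_nonneg w]
    calc 2 / Real.sqrt (1 + ‖w‖ ^ 2) ≤ 2 / ‖w‖ := by gcongr
    _ = 2 * (‖w‖)⁻¹ := by ring

lemma abs_invPart_le_of_sphDist_lt' {p : OnePoint ℂ} {δ : ℝ} (hδ0 : 0 < δ) (hδ1 : δ ≤ 1)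
    (h : sphDist p ∞ < δ) : ‖sphToC (sphInv p)‖ ≤ δ := by
  by_cases hpi : p = ∞
  · subst hpi
    rw [sphInv_infty', sphToC_coe]
    simpa using hδ0.le
  · obtain ⟨w, rfl⟩ := OnePoint.ne_infty_iff_exists.mp hpi
    rw [sphDist_coe_infty'] at h
    set a := ‖w‖ with ha
    have ha0 : 0 ≤ a := norm_nonneg w
    have hs0 : 0 < Real.sqrt (1 + a ^ 2) := Real.sqrt_pos.mpr (by positivity)
    have hsq : Real.sqrt (1 + a ^ 2) ^ 2 = 1 + a ^ 2 := Real.sq_sqrt (by positivity)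
    have h2 : 2 < δ * Real.sqrt (1 + a ^ 2) := by
      rw [div_lt_iff₀ hs0] at h
      linarith
    have h3 : 4 < δ ^ 2 * (1 + a ^ 2) := by nlinarith
    have hδsq : δ ^ 2 ≤ 1 := by nlinarith
    have h4 : 1 < δ * a := by nlinarith [mul_nonneg hδ0.le ha0]
    have hapos : 0 < a := by nlinarith
    have hw : w ≠ 0 := by
      intro h0
      rw [ha, h0, norm_zero] at hapos
      exact lt_irrefl 0 hapos
    rw [sphInv_coe_of_ne' hw, sphToC_coe, norm_inv, ← ha]
    nlinarith [mul_inv_cancel₀ hapos.ne', inv_pos.mpr hapos]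

/-- If `gₙ` are meromorphic on `D_r(z₀)`, zero-free on `D_{r/2}(z₀)`, and converge locally
uniformly (spherical metric) to the constant `∞` on the punctured disk `D_r(z₀) \ {z₀}`, then
they converge locally uniformly to `∞` on the full disk `D_{r/2}(z₀)`. -/
theorem locUnif_tendsto_infty_on_disk_of_punctured
    (z₀ : ℂ) (r : ℝ) (hr : 0 < r)
    (g : ℕ → ℂ → OnePoint ℂ)
    (hmero : ∀ n, SphMeromorphicOn (g n) (ball z₀ r))
    (hzf : ∀ n, ∀ z ∈ ball z₀ (r / 2), g n z ≠ ((0 : ℂ) : OnePoint ℂ))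
    (hconv : SphLocUnifOn g (fun _ => ∞) (ball z₀ r \ {z₀})) :
    SphLocUnifOn g (fun _ => ∞) (ball z₀ (r / 2)) := by
  intro K hK hKc ε hε
  rcases K.eq_empty_or_nonempty with rfl | hKne
  · exact ⟨0, fun n _ z hz => absurd hz (notMem_empty z)⟩
  obtain ⟨x, hxK, hxmax⟩ :=
    hKc.exists_isMaxOn hKne (continuous_id.dist continuous_const).continuousOn
  rw [isMaxOn_iff] at hxmax
  set ρ := max (dist x z₀) (r / 4) with hρ
  have hρpos : 0 < ρ := lt_of_lt_of_le (by linarith) (le_max_right _ _)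
  have hxlt : dist x z₀ < r / 2 := by simpa [mem_ball] using hK hxK
  have hρlt : ρ < r / 2 := max_lt hxlt (by linarith)
  have hKsub : K ⊆ closedBall z₀ ρ := fun z hz =>
    mem_closedBall.mpr (le_trans (hxmax z hz) (le_max_left _ _))
  have hsub : sphere z₀ ρ ⊆ ball z₀ r \ {z₀} := by
    intro w hw
    rw [mem_sphere] at hw
    refine ⟨mem_ball.mpr (by rw [hw]; linarith), ?_⟩
    simp only [mem_singleton_iff]
    intro h
    rw [h, dist_self] at hw
    linarith
  set δ := min (ε / 4) 1 with hδ
  have hδpos : 0 < δ := lt_min (by linarith) one_pos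
  have hδ1 : δ ≤ 1 := min_le_right _ _
  obtain ⟨N, hN⟩ := hconv (sphere z₀ ρ) hsub (isCompact_sphere _ _) δ hδpos
  refine ⟨N, fun n hn z hzK => ?_⟩
  set h := fun w => sphToC (sphInv (g n w)) with hh
  have hana : ∀ w ∈ ball z₀ (r / 2), AnalyticAt ℂ h w := fun w hw =>
    analyticAt_invPart' (hmero n w (ball_subset_ball (by linarith) hw)) (hzf n w hw)
  have hd : DifferentiableOn ℂ h (ball z₀ (r / 2)) := fun w hw =>
    (hana w hw).differentiableAt.differentiableWithinAt
  have hdiff : DiffContOnCl ℂ h (ball z₀ ρ) := by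
    refine ⟨hd.mono (ball_subset_ball hρlt.le), hd.continuousOn.mono ?_⟩
    rw [closure_ball z₀ hρpos.ne']
    exact fun w hw => mem_ball.mpr (lt_of_le_of_lt (mem_closedBall.mp hw) hρlt)
  have hmax : ∀ w ∈ closedBall z₀ ρ, ‖h w‖ ≤ δ := by
    intro w hw
    refine Complex.norm_le_of_forall_mem_frontier_norm_le isBounded_ball hdiff ?_ ?_
    · intro v hv
      rw [frontier_ball z₀ hρpos.ne'] at hv
      have h1 := hN n hn v hv
      have h2 := abs_invPart_le_of_sphDist_lt' hδpos hδ1 h1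
      simpa [hh] using h2
    · rw [closure_ball z₀ hρpos.ne']
      exact hw
  have hle := sphDist_infty_le' (hzf n z (hK hzK))
  have hz2 : ‖sphToC (sphInv (g n z))‖ ≤ δ := by
    simpa [hh] using hmax z (hKsub hzK)
  have hδε : δ ≤ ε / 4 := min_le_left _ _
  calc sphDist (g n z) ((fun _ => ∞) z) = sphDist (g n z) ∞ := rfl
    _ ≤ 2 * ‖sphToC (sphInv (g n z))‖ := hle
    _ ≤ 2 * δ := by linarith
    _ < ε := by linarith
end
end
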